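/- arXiv:2209.15224 — 5 statements merged into one kernel-verified Lean document; each statement's English description precedes it below -/
import Mathlib

section
/- Correctness of exhaustive-search alignment (Theorem 5). In the alignment setup, suppose there exists alpha in (0,1/2] such that (i) eps < 1/2 - alpha and (ii) min_{k in S} ||mu1^{(k)*} - mu2^{(k)*}||_2 > 0 and min_{k in S} ||mu1^{(k)*} - mu2^{(k)*}||_2 >= max{ (8/alpha) h_mu, ((4 eps + 8)/alpha) xi }. Then every minimizer (r_hat, r_hat') of score(.,.) over all alignments v joined-with u satisfies either (r_hat_k = r_k and r_hat'_k = r_k' for all k in S) or (r_hat_k = r_k' and r_hat'_k = r_k for all k in S). -/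
open Finset
open scoped Classical

noncomputable section

namespace GMMAlign

/-- Euclidean space `ℝ^p`. -/
abbrev E (p : ℕ) := EuclideanSpace ℝ (Fin p)

/-- The alignment score of the alignment `v` (and its complement `!v`):
`mt k b` is the `b`-labelled initial mean estimate of task `k`
(`b = false` for label 1, `b = true` for label 2). -/
def alignScore (p K : ℕ) (mt : Fin K → Bool → E p) (v : Fin K → Bool) : ℝ :=
  (∑ k1, ∑ k2, if k1 ≠ k2 then ‖mt k1 (v k1) - mt k2 (v k2)‖ else 0) +
    (∑ k1, ∑ k2, if k1 ≠ k2 then ‖mt k1 (!v k1) - mt k2 (!v k2)‖ else 0)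

lemma tri {p : ℕ} (a c b : E p) : ‖a - b‖ ≤ ‖a - c‖ + ‖c - b‖ := by
  calc ‖a - b‖ = ‖(a - c) + (c - b)‖ := by rw [sub_add_sub_cancel]
  _ ≤ _ := norm_add_le _ _

lemma cross_bound {p : ℕ} (A A' B B' c1 c2 : E p) (δ Δ : ℝ)
    (hA : ‖A - c2‖ ≤ δ) (hA' : ‖A' - c1‖ ≤ δ) (hB : ‖B - c1‖ ≤ δ) (hB' : ‖B' - c2‖ ≤ δ)
    (hΔ : Δ = ‖c1 - c2‖) :
    ‖A' - B‖ + ‖A - B'‖ ≤ ‖A - B‖ + ‖A' - B'‖ + (8*δ - 2*Δ) := by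
  have h1 : ‖A' - B‖ ≤ ‖A' - c1‖ + ‖c1 - B‖ := tri _ _ _
  have h1' : ‖c1 - B‖ = ‖B - c1‖ := norm_sub_rev _ _
  have h2 : ‖A - B'‖ ≤ ‖A - c2‖ + ‖c2 - B'‖ := tri _ _ _
  have h2' : ‖c2 - B'‖ = ‖B' - c2‖ := norm_sub_rev _ _
  have h3 : ‖c2 - c1‖ ≤ ‖c2 - A‖ + ‖A - c1‖ := tri _ _ _
  have h3' : ‖A - c1‖ ≤ ‖A - B‖ + ‖B - c1‖ := tri _ _ _
  have h3'' : ‖c2 - A‖ = ‖A - c2‖ := norm_sub_rev _ _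
  have h3''' : ‖c2 - c1‖ = ‖c1 - c2‖ := norm_sub_rev _ _
  have h4 : ‖c1 - c2‖ ≤ ‖c1 - A'‖ + ‖A' - c2‖ := tri _ _ _
  have h4' : ‖A' - c2‖ ≤ ‖A' - B'‖ + ‖B' - c2‖ := tri _ _ _
  have h4'' : ‖c1 - A'‖ = ‖A' - c1‖ := norm_sub_rev _ _
  linarith

lemma out_bound {p : ℕ} (A A' z z' c1 c2 : E p) (δ Δ : ℝ)
    (hA : ‖A - c2‖ ≤ δ) (hA' : ‖A' - c1‖ ≤ δ) (hΔ : Δ = ‖c1 - c2‖) :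
    ‖A' - z‖ + ‖A - z'‖ ≤ ‖A - z‖ + ‖A' - z'‖ + (2*Δ + 4*δ) := by
  have h1 : ‖A' - z‖ ≤ ‖A' - c1‖ + ‖c1 - z‖ := tri _ _ _
  have h2 : ‖c1 - z‖ ≤ ‖c1 - c2‖ + ‖c2 - z‖ := tri _ _ _
  have h3 : ‖c2 - z‖ ≤ ‖c2 - A‖ + ‖A - z‖ := tri _ _ _
  have h3' : ‖c2 - A‖ = ‖A - c2‖ := norm_sub_rev _ _
  have h4 : ‖A - z'‖ ≤ ‖A - c2‖ + ‖c2 - z'‖ := tri _ _ _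
  have h5 : ‖c2 - z'‖ ≤ ‖c2 - c1‖ + ‖c1 - z'‖ := tri _ _ _
  have h5' : ‖c2 - c1‖ = ‖c1 - c2‖ := norm_sub_rev _ _
  have h6 : ‖c1 - z'‖ ≤ ‖c1 - A'‖ + ‖A' - z'‖ := tri _ _ _
  have h6' : ‖c1 - A'‖ = ‖A' - c1‖ := norm_sub_rev _ _
  linarith

lemma flip_bound (p K : ℕ) (mt : Fin K → Bool → E p) (vhat : Fin K → Bool)
    (N M : Finset (Fin K)) (hdisj : ∀ k, ¬(k ∈ N ∧ k ∈ M))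
    (c1 c2 : E p) (δ Δ : ℝ)
    (hM1 : ∀ k ∈ M, ‖mt k (vhat k) - c1‖ ≤ δ)
    (hM2 : ∀ k ∈ M, ‖mt k (!vhat k) - c2‖ ≤ δ)
    (hN1 : ∀ k ∈ N, ‖mt k (vhat k) - c2‖ ≤ δ)
    (hN2 : ∀ k ∈ N, ‖mt k (!vhat k) - c1‖ ≤ δ)
    (hΔ : Δ = ‖c1 - c2‖)
    (hmin : alignScore p K mt vhat ≤
      alignScore p K mt (fun k => if k ∈ N then !vhat k else vhat k)) :
    0 ≤ (N.card : ℝ) * ((M.card : ℝ) * (8*δ - 2*Δ) +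
      ((K : ℝ) - N.card - M.card) * (2*Δ + 4*δ)) := by
  classical
  set v' : Fin K → Bool := fun k => if k ∈ N then !vhat k else vhat k with hv'
  set χN : Fin K → ℝ := fun k => if k ∈ N then 1 else 0 with hχN
  set χM : Fin K → ℝ := fun k => if k ∈ M then 1 else 0 with hχM
  set w : Fin K → Fin K → ℝ := fun k1 k2 =>
    (8*δ - 2*Δ) * (χN k1 * χM k2 + χM k1 * χN k2) +
    (2*Δ + 4*δ) * (χN k1 * (1 - χN k2 - χM k2) + (1 - χN k1 - χM k1) * χN k2) with hwdef
  have hAS : ∀ v : Fin K → Bool, alignScore p K mt v =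
      ∑ k1, ∑ k2, (if k1 ≠ k2 then
        ‖mt k1 (v k1) - mt k2 (v k2)‖ + ‖mt k1 (!v k1) - mt k2 (!v k2)‖ else 0) := by
    intro v
    rw [alignScore, ← Finset.sum_add_distrib]
    refine Finset.sum_congr rfl fun k1 _ => ?_
    rw [← Finset.sum_add_distrib]
    refine Finset.sum_congr rfl fun k2 _ => ?_
    split_ifs <;> simp
  have hpt : ∀ k1 k2 : Fin K,
      (if k1 ≠ k2 then ‖mt k1 (v' k1) - mt k2 (v' k2)‖ + ‖mt k1 (!v' k1) - mt k2 (!v' k2)‖ else 0)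
      ≤ (if k1 ≠ k2 then ‖mt k1 (vhat k1) - mt k2 (vhat k2)‖ + ‖mt k1 (!vhat k1) - mt k2 (!vhat k2)‖ else 0)
        + w k1 k2 := by
    intro k1 k2
    by_cases h12 : k1 = k2
    · subst h12
      have hw0 : w k1 k1 = 0 := by
        by_cases h1 : k1 ∈ N <;> by_cases h2 : k1 ∈ M
        · exact absurd ⟨h1, h2⟩ (hdisj k1)
        all_goals simp [hwdef, hχN, hχM, h1, h2]
      simp [hw0]
    · rw [if_pos h12, if_pos h12]
      by_cases h1 : k1 ∈ N <;> by_cases h2 : k2 ∈ N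
      · -- both in N
        have hm1 : k1 ∉ M := fun h => hdisj k1 ⟨h1, h⟩
        have hm2 : k2 ∉ M := fun h => hdisj k2 ⟨h2, h⟩
        have hw0 : w k1 k2 = 0 := by simp [hwdef, hχN, hχM, h1, h2, hm1, hm2]
        have e1 : v' k1 = !vhat k1 := by simp [hv', h1]
        have e2 : v' k2 = !vhat k2 := by simp [hv', h2]
        rw [e1, e2, hw0, Bool.not_not, Bool.not_not]
        linarith
      · -- k1 ∈ N, k2 ∉ N
        have hm1 : k1 ∉ M := fun h => hdisj k1 ⟨h1, h⟩
        have e1 : v' k1 = !vhat k1 := by simp [hv', h1]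
        have e2 : v' k2 = vhat k2 := by simp [hv', h2]
        rw [e1, e2, Bool.not_not]
        by_cases h2m : k2 ∈ M
        · have hw0 : w k1 k2 = 8*δ - 2*Δ := by
            simp only [hwdef, hχN, hχM, if_pos h1, if_neg h2, if_pos h2m, if_neg hm1]; ring
          rw [hw0]
          exact cross_bound (mt k1 (vhat k1)) (mt k1 (!vhat k1)) (mt k2 (vhat k2))
            (mt k2 (!vhat k2)) c1 c2 δ Δ (hN1 k1 h1) (hN2 k1 h1) (hM1 k2 h2m) (hM2 k2 h2m) hΔ
        · have hw0 : w k1 k2 = 2*Δ + 4*δ := by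
            simp only [hwdef, hχN, hχM, if_pos h1, if_neg h2, if_neg h2m, if_neg hm1]; ring
          rw [hw0]
          exact out_bound (mt k1 (vhat k1)) (mt k1 (!vhat k1)) (mt k2 (vhat k2))
            (mt k2 (!vhat k2)) c1 c2 δ Δ (hN1 k1 h1) (hN2 k1 h1) hΔ
      · -- k1 ∉ N, k2 ∈ N
        have hm2 : k2 ∉ M := fun h => hdisj k2 ⟨h2, h⟩
        have e1 : v' k1 = vhat k1 := by simp [hv', h1]
        have e2 : v' k2 = !vhat k2 := by simp [hv', h2]
        rw [e1, e2, Bool.not_not]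
        have r1 : ‖mt k1 (vhat k1) - mt k2 (!vhat k2)‖ = ‖mt k2 (!vhat k2) - mt k1 (vhat k1)‖ :=
          norm_sub_rev _ _
        have r2 : ‖mt k1 (!vhat k1) - mt k2 (vhat k2)‖ = ‖mt k2 (vhat k2) - mt k1 (!vhat k1)‖ :=
          norm_sub_rev _ _
        have r3 : ‖mt k1 (vhat k1) - mt k2 (vhat k2)‖ = ‖mt k2 (vhat k2) - mt k1 (vhat k1)‖ :=
          norm_sub_rev _ _
        have r4 : ‖mt k1 (!vhat k1) - mt k2 (!vhat k2)‖ = ‖mt k2 (!vhat k2) - mt k1 (!vhat k1)‖ :=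
          norm_sub_rev _ _
        by_cases h1m : k1 ∈ M
        · have hw0 : w k1 k2 = 8*δ - 2*Δ := by
            simp only [hwdef, hχN, hχM, if_pos h2, if_neg h1, if_pos h1m, if_neg hm2]; ring
          have := cross_bound (mt k2 (vhat k2)) (mt k2 (!vhat k2)) (mt k1 (vhat k1))
            (mt k1 (!vhat k1)) c1 c2 δ Δ (hN1 k2 h2) (hN2 k2 h2) (hM1 k1 h1m) (hM2 k1 h1m) hΔ
          rw [hw0]; linarith
        · have hw0 : w k1 k2 = 2*Δ + 4*δ := by
            simp only [hwdef, hχN, hχM, if_pos h2, if_neg h1, if_neg h1m, if_neg hm2]; ring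
          have := out_bound (mt k2 (vhat k2)) (mt k2 (!vhat k2)) (mt k1 (vhat k1))
            (mt k1 (!vhat k1)) c1 c2 δ Δ (hN1 k2 h2) (hN2 k2 h2) hΔ
          rw [hw0]; linarith
      · -- neither in N
        have hw0 : w k1 k2 = 0 := by simp [hwdef, hχN, hχM, h1, h2]
        have e1 : v' k1 = vhat k1 := by simp [hv', h1]
        have e2 : v' k2 = vhat k2 := by simp [hv', h2]
        rw [e1, e2, hw0]
        linarith
  -- sums of indicators
  have hχNsum : ∑ k, χN k = (N.card : ℝ) := by
    rw [hχN]
    rw [Finset.sum_ite_mem, Finset.univ_inter, Finset.sum_const, nsmul_eq_mul, mul_one]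
  have hχMsum : ∑ k, χM k = (M.card : ℝ) := by
    rw [hχM]
    rw [Finset.sum_ite_mem, Finset.univ_inter, Finset.sum_const, nsmul_eq_mul, mul_one]
  have hχOsum : ∑ k, (1 - χN k - χM k) = (K : ℝ) - N.card - M.card := by
    rw [Finset.sum_sub_distrib, Finset.sum_sub_distrib, Finset.sum_const, hχNsum, hχMsum]
    simp [Finset.card_univ]
  have hc : ∀ (c : ℝ) (f g : Fin K → ℝ),
      (∑ k1, ∑ k2, c * (f k1 * g k2)) = c * ((∑ k, f k) * (∑ k, g k)) := by
    intro c f g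
    rw [Finset.sum_mul_sum, Finset.mul_sum]
    exact Finset.sum_congr rfl fun k1 _ => by rw [Finset.mul_sum]
  have hw : ∑ k1, ∑ k2, w k1 k2 =
      2 * ((N.card : ℝ) * ((M.card : ℝ) * (8*δ - 2*Δ) +
        ((K : ℝ) - N.card - M.card) * (2*Δ + 4*δ))) := by
    have hsplit : ∑ k1, ∑ k2, w k1 k2
        = (∑ k1, ∑ k2, (8*δ-2*Δ) * (χN k1 * χM k2))
          + ((∑ k1, ∑ k2, (8*δ-2*Δ) * (χM k1 * χN k2))
          + ((∑ k1, ∑ k2, (2*Δ+4*δ) * (χN k1 * (1 - χN k2 - χM k2)))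
          + (∑ k1, ∑ k2, (2*Δ+4*δ) * ((1 - χN k1 - χM k1) * χN k2)))) := by
      rw [← Finset.sum_add_distrib, ← Finset.sum_add_distrib, ← Finset.sum_add_distrib]
      refine Finset.sum_congr rfl fun k1 _ => ?_
      rw [← Finset.sum_add_distrib, ← Finset.sum_add_distrib, ← Finset.sum_add_distrib]
      refine Finset.sum_congr rfl fun k2 _ => ?_
      simp only [hwdef]; ring
    rw [hsplit, hc (8*δ-2*Δ) χN χM, hc (8*δ-2*Δ) χM χN,
      hc (2*Δ+4*δ) χN (fun k => 1 - χN k - χM k),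
      hc (2*Δ+4*δ) (fun k => 1 - χN k - χM k) χN,
      hχNsum, hχMsum]
    rw [show (∑ k, (fun k => 1 - χN k - χM k) k) = (K : ℝ) - N.card - M.card from hχOsum]
    ring
  have h1 : alignScore p K mt v' ≤ alignScore p K mt vhat + ∑ k1, ∑ k2, w k1 k2 := by
    rw [hAS v', hAS vhat, ← Finset.sum_add_distrib]
    refine Finset.sum_le_sum fun k1 _ => ?_
    rw [← Finset.sum_add_distrib]
    exact Finset.sum_le_sum fun k2 _ => hpt k1 k2
  have h0 : 0 ≤ ∑ k1, ∑ k2, w k1 k2 := by linarith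
  rw [hw] at h0
  linarith


set_option maxHeartbeats 1000000 in
/-- **Theorem 5 (correctness of exhaustive-search alignment).** -/
theorem exhaustive_search_alignment_correct
    (p K : ℕ) (S : Finset (Fin K)) (hS : 1 ≤ S.card)
    (mt : Fin K → Bool → E p) (μ1s μ2s : Fin K → E p) (r : Fin K → Bool)
    (hμ ξ : ℝ) (hhμ : 0 ≤ hμ) (hξ : 0 ≤ ξ)
    (mb1 mb2 : E p)
    (hcen : ∀ k ∈ S, ‖μ1s k - mb1‖ ≤ hμ ∧ ‖μ2s k - mb2‖ ≤ hμ)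
    (hinit : ∀ k ∈ S, ‖mt k (r k) - μ1s k‖ ≤ ξ ∧ ‖mt k (!r k) - μ2s k‖ ≤ ξ)
    (α : ℝ) (hα0 : 0 < α) (hα1 : α ≤ 1 / 2)
    (heps : ((K : ℝ) - S.card) / S.card < 1 / 2 - α)
    (hsep : ∀ k ∈ S, 0 < ‖μ1s k - μ2s k‖ ∧
      max (8 / α * hμ) ((4 * (((K : ℝ) - S.card) / S.card) + 8) / α * ξ) ≤
        ‖μ1s k - μ2s k‖)
    (vhat : Fin K → Bool)
    (hmin : ∀ v : Fin K → Bool, alignScore p K mt vhat ≤ alignScore p K mt v) :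
    (∀ k ∈ S, vhat k = r k) ∨ (∀ k ∈ S, vhat k = !r k) := by
  by_contra hcon
  push_neg at hcon
  obtain ⟨⟨kg, hkgS, hkg⟩, ⟨kb, hkbS, hkb⟩⟩ := hcon
  -- hkg : vhat kg ≠ r kg  (from negation of first disjunct)
  -- hkb : vhat kb ≠ !r kb
  have hkb' : vhat kb = r kb := by
    revert hkb; cases r kb <;> cases hv : vhat kb <;> simp
  set G : Finset (Fin K) := S.filter (fun k => vhat k = r k) with hGdef
  set B : Finset (Fin K) := S.filter (fun k => ¬ vhat k = r k) with hBdef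
  have hkgB : kg ∈ B := by rw [hBdef, Finset.mem_filter]; exact ⟨hkgS, hkg⟩
  have hkbG : kb ∈ G := by rw [hGdef, Finset.mem_filter]; exact ⟨hkbS, hkb'⟩
  have hGpos : 0 < G.card := Finset.card_pos.mpr ⟨kb, hkbG⟩
  have hBpos : 0 < B.card := Finset.card_pos.mpr ⟨kg, hkgB⟩
  have hGBcard : G.card + B.card = S.card := by
    rw [hGdef, hBdef]
    exact Finset.card_filter_add_card_filter_not (p := fun k => vhat k = r k)
  set δ : ℝ := hμ + ξ with hδdef
  set Δb : ℝ := ‖mb1 - mb2‖ with hΔbdef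
  -- norm facts
  have hG1 : ∀ k ∈ G, ‖mt k (vhat k) - mb1‖ ≤ δ := by
    intro k hk
    rw [hGdef, Finset.mem_filter] at hk
    obtain ⟨hkS, hkr⟩ := hk
    rw [hkr]
    have h1 := (hinit k hkS).1
    have h2 := (hcen k hkS).1
    have := tri (mt k (r k)) (μ1s k) mb1
    linarith
  have hG2 : ∀ k ∈ G, ‖mt k (!vhat k) - mb2‖ ≤ δ := by
    intro k hk
    rw [hGdef, Finset.mem_filter] at hk
    obtain ⟨hkS, hkr⟩ := hk
    rw [hkr]
    have h1 := (hinit k hkS).2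
    have h2 := (hcen k hkS).2
    have := tri (mt k (!r k)) (μ2s k) mb2
    linarith
  have hB1 : ∀ k ∈ B, ‖mt k (vhat k) - mb2‖ ≤ δ := by
    intro k hk
    rw [hBdef, Finset.mem_filter] at hk
    obtain ⟨hkS, hkr⟩ := hk
    have hkr' : vhat k = !r k := by
      revert hkr; cases r k <;> cases hv : vhat k <;> simp
    rw [hkr']
    have h1 := (hinit k hkS).2
    have h2 := (hcen k hkS).2
    have := tri (mt k (!r k)) (μ2s k) mb2
    linarith
  have hB2 : ∀ k ∈ B, ‖mt k (!vhat k) - mb1‖ ≤ δ := by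
    intro k hk
    rw [hBdef, Finset.mem_filter] at hk
    obtain ⟨hkS, hkr⟩ := hk
    have hkr' : vhat k = !r k := by
      revert hkr; cases r k <;> cases hv : vhat k <;> simp
    rw [hkr', Bool.not_not]
    have h1 := (hinit k hkS).1
    have h2 := (hcen k hkS).1
    have := tri (mt k (r k)) (μ1s k) mb1
    linarith
  have hdisjBG : ∀ k, ¬(k ∈ B ∧ k ∈ G) := by
    intro k ⟨h1, h2⟩
    rw [hBdef, Finset.mem_filter] at h1
    rw [hGdef, Finset.mem_filter] at h2
    exact h1.2 h2.2
  have hdisjGB : ∀ k, ¬(k ∈ G ∧ k ∈ B) := fun k ⟨h1, h2⟩ => hdisjBG k ⟨h2, h1⟩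
  -- apply flip_bound with the minority side flipped
  obtain ⟨n, m, hn1, hm2s, hnm, hkey⟩ :
      ∃ n m : ℕ, 1 ≤ n ∧ S.card ≤ 2*m ∧ n + m = S.card ∧
        0 ≤ (n : ℝ) * ((m : ℝ) * (8*δ - 2*Δb) + ((K : ℝ) - n - m) * (2*Δb + 4*δ)) := by
    by_cases hc : B.card ≤ G.card
    · refine ⟨B.card, G.card, hBpos, by omega, by omega, ?_⟩
      exact flip_bound p K mt vhat B G hdisjBG mb1 mb2 δ Δb hG1 hG2 hB1 hB2 rfl (hmin _)
    · refine ⟨G.card, B.card, hGpos, by omega, by omega, ?_⟩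
      exact flip_bound p K mt vhat G B hdisjGB mb2 mb1 δ Δb hB1 hB2 hG1 hG2
        (norm_sub_rev mb1 mb2) (hmin _)
  -- numeric part
  set s : ℝ := (S.card : ℝ) with hsdef
  set o : ℝ := (K : ℝ) - s with hodef
  have hs1 : (1:ℝ) ≤ s := by rw [hsdef]; exact_mod_cast hS
  have hspos : (0:ℝ) < s := by linarith
  have hKS : S.card ≤ K := by
    have := Finset.card_le_univ S
    simpa using this
  have ho0 : (0:ℝ) ≤ o := by
    rw [hodef, hsdef]
    have : (S.card : ℝ) ≤ (K : ℝ) := by exact_mod_cast hKS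
    linarith
  have ho : o < (1/2 - α) * s := by
    rw [hodef]
    have := (div_lt_iff₀ hspos).mp heps
    linarith
  set Δ0 : ℝ := ‖μ1s kg - μ2s kg‖ with hΔ0def
  obtain ⟨hΔ0pos, hsepkg⟩ := hsep kg hkgS
  obtain ⟨hm1, hm2'⟩ := max_le_iff.mp hsepkg
  have hαΔ1 : 8 * hμ ≤ Δ0 * α := by
    rw [div_mul_eq_mul_div, div_le_iff₀ hα0] at hm1
    linarith
  have hαΔ2 : (4*o + 8*s) * ξ ≤ Δ0 * α * s := by
    rw [div_mul_eq_mul_div, div_le_iff₀ hα0] at hm2'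
    have h2 := mul_le_mul_of_nonneg_right hm2' (le_of_lt hspos)
    have h3 : (4 * (((K : ℝ) - S.card) / S.card) + 8) * ξ * s = (4*o + 8*s) * ξ := by
      rw [hodef, hsdef]
      field_simp
    rw [h3] at h2
    linarith
  have hΔb : Δ0 - 2*hμ ≤ Δb := by
    have t1 : ‖μ1s kg - μ2s kg‖ ≤ ‖μ1s kg - mb1‖ + ‖mb1 - μ2s kg‖ := tri _ _ _
    have t2 : ‖mb1 - μ2s kg‖ ≤ ‖mb1 - mb2‖ + ‖mb2 - μ2s kg‖ := tri _ _ _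
    have t3 : ‖mb2 - μ2s kg‖ = ‖μ2s kg - mb2‖ := norm_sub_rev _ _
    have h1 := (hcen kg hkgS).1
    have h2 := (hcen kg hkgS).2
    rw [hΔ0def, hΔbdef]
    linarith
  -- final contradiction (as in scratch3)
  have hΔbpos : 0 < Δb := by
    linarith [mul_nonneg (show (0:ℝ) ≤ 1/2 - α by linarith) (le_of_lt hΔ0pos)]
  have h2as : 2*α*s < s - 2*o := by linarith
  have hBB1 : 2*α*s*Δb < (s - 2*o)*Δb := mul_lt_mul_of_pos_right h2as hΔbpos
  have t1 : 8*hμ*s ≤ Δ0*α*s := mul_le_mul_of_nonneg_right hαΔ1 (le_of_lt hspos)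
  have t3 : 2*α*s*(Δ0 - 2*hμ) ≤ 2*α*s*Δb :=
    mul_le_mul_of_nonneg_left hΔb (by nlinarith)
  have t4 : 4*α*s*hμ ≤ 2*s*hμ := by
    have := mul_nonneg (mul_nonneg (show (0:ℝ) ≤ 2 - 4*α by linarith) (le_of_lt hspos)) hhμ
    linarith
  have hA : 6*s*hμ + (4*o+8*s)*ξ ≤ 2*α*s*Δb := by linarith
  have hsΔb : 0 ≤ (1 - 2*α) * s * Δb :=
    mul_nonneg (mul_nonneg (by linarith) (le_of_lt hspos)) (le_of_lt hΔbpos)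
  have hoξ : 0 ≤ o * ξ := mul_nonneg ho0 hξ
  have hΔb4 : 4*(hμ+ξ) ≤ Δb := by
    by_contra hcc
    push_neg at hcc
    have := mul_lt_mul_of_pos_left hcc hspos
    linarith [mul_nonneg (le_of_lt hspos) hξ, mul_nonneg (le_of_lt hspos) hhμ]
  have hnpos : (0:ℝ) < (n:ℝ) := by exact_mod_cast hn1
  have hnmr : (n:ℝ) + (m:ℝ) = s := by rw [hsdef]; exact_mod_cast hnm
  have hmr : s ≤ 2*(m:ℝ) := by rw [hsdef]; exact_mod_cast hm2s
  have hor : (K:ℝ) - n - m = o := by rw [hodef]; linarith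
  rw [hor] at hkey
  have hinner : 0 ≤ (m:ℝ) * (8*δ - 2*Δb) + o * (2*Δb + 4*δ) := by
    by_contra hcon2
    push_neg at hcon2
    have := mul_neg_of_pos_of_neg hnpos hcon2
    linarith
  have hm2 : (s/2) * (2*Δb - 8*δ) ≤ (m:ℝ) * (2*Δb - 8*δ) := by
    refine mul_le_mul_of_nonneg_right (by linarith) (by rw [hδdef]; linarith)
  have hsoh : 0 ≤ (s - 2*o) * hμ := mul_nonneg (by nlinarith) hhμ
  have hsξ : 0 ≤ s * ξ := mul_nonneg (le_of_lt hspos) hξ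
  rw [hδdef] at hinner hm2
  linarith


end GMMAlign
end
end

section
/- Correctness of label swapping for transfer learning (Theorem 9). In the transfer-learning alignment setup, suppose there exists alpha in (0,1/2] such that (i) eps < 1/2 - alpha and (ii) ||mu2^{(0)*} - mu1^{(0)*}||_2 > max{ (8/alpha) h_mu, ((4 eps + 8)/alpha) xi_0 }, and suppose the given source alignment (r_hat, r_hat') in {1,2}^K x {1,2}^K with {r_hat_k, r_hat'_k} = {1,2} for all k satisfies either (r_hat_k = r_k and r_hat'_k = r_k' for all k in S) or (r_hat_k = r_k' and r_hat'_k = r_k for all k in S). Form the two extended alignments over the K+1 tasks {0,1,...,K}: A = ((1, r_hat), (2, r_hat')) and A' = ((2, r_hat), (1, r_hat')), and output A' if score(A) > score(A') (score computed over all ordered pairs of distinct tasks in {0,...,K}) and A otherwise. Then the output (r_hat^{(T)}, r_hat'^{(T)}) satisfies either (r_hat^{(T)}_k = r_k and r_hat'^{(T)}_k = r_k' for all k in {0} union S) or (r_hat'^{(T)}_k = r_k and r_hat^{(T)}_k = r_k' for all k in {0} union S). -/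
open Finset
open scoped Classical

noncomputable section

namespace GMMAlign

lemma tri_aux {p : ℕ} (a b c : E p) : ‖a - c‖ ≤ ‖a - b‖ + ‖b - c‖ := by
  simpa [dist_eq_norm] using dist_triangle a b c

lemma sum_pairs_aux {p K : ℕ} (f : Fin (K+1) → E p) :
    (∑ k1, ∑ k2, if k1 ≠ k2 then ‖f k1 - f k2‖ else 0)
      = 2 * ∑ k : Fin K, ‖f 0 - f k.succ‖
        + ∑ k1 : Fin K, ∑ k2 : Fin K, (if k1 ≠ k2 then ‖f k1.succ - f k2.succ‖ else 0) := by
  simp only [Fin.sum_univ_succ, ne_eq, not_true_eq_false, if_false, Fin.succ_ne_zero,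
    not_false_eq_true, if_true, Fin.succ_inj, ite_not]
  simp only [show ∀ k : Fin K, ((0 : Fin (K+1)) = k.succ) = False from fun k => by
    simp [(Fin.succ_ne_zero k).symm], if_false]
  rw [Finset.sum_add_distrib]
  have : ∀ k : Fin K, ‖f k.succ - f 0‖ = ‖f 0 - f k.succ‖ := fun k => norm_sub_rev _ _
  simp only [this]
  have : ∀ k1 k2 : Fin K, (if k1 = k2 then 0 else ‖f k1.succ - f k2.succ‖)
      = (if k1 ≠ k2 then ‖f k1.succ - f k2.succ‖ else 0) := by
    intro k1 k2; by_cases h : k1 = k2 <;> simp [h]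
  simp only [this]
  ring

lemma score_decomp_aux {p K : ℕ} (mt : Fin (K+1) → Bool → E p) (rhat : Fin K → Bool)
    (c : Bool) :
    alignScore p (K+1) mt (Fin.cons c rhat)
      = 2 * (∑ k : Fin K, ‖mt 0 c - mt k.succ (rhat k)‖)
        + 2 * (∑ k : Fin K, ‖mt 0 (!c) - mt k.succ (!(rhat k))‖)
        + ((∑ k1 : Fin K, ∑ k2 : Fin K,
              (if k1 ≠ k2 then ‖mt k1.succ (rhat k1) - mt k2.succ (rhat k2)‖ else 0))
          + (∑ k1 : Fin K, ∑ k2 : Fin K,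
              (if k1 ≠ k2 then ‖mt k1.succ (!(rhat k1)) - mt k2.succ (!(rhat k2))‖ else 0))) := by
  have e1 := sum_pairs_aux (fun k => mt k ((Fin.cons c rhat : Fin (K+1) → Bool) k))
  have e2 := sum_pairs_aux (fun k => mt k (!((Fin.cons c rhat : Fin (K+1) → Bool) k)))
  simp only [Fin.cons_zero, Fin.cons_succ] at e1 e2
  unfold alignScore
  rw [e1, e2]
  ring

lemma core_aux (p K : ℕ) (S : Finset (Fin K)) (mt : Fin (K+1) → Bool → E p)
    (ν1 ν2 : E p) (rhat : Fin K → Bool) (b0 : Bool) (ξ0 η : ℝ)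
    (h0a : ‖mt 0 b0 - ν1‖ ≤ ξ0) (h0b : ‖mt 0 (!b0) - ν2‖ ≤ ξ0)
    (hSa : ∀ k ∈ S, ‖mt k.succ (rhat k) - ν1‖ ≤ η)
    (hSb : ∀ k ∈ S, ‖mt k.succ (!(rhat k)) - ν2‖ ≤ η)
    (hnum : (S.card : ℝ) * (4*ξ0 + 4*η - 2*‖ν2 - ν1‖)
        + ((K : ℝ) - S.card) * (2*‖ν2 - ν1‖ + 4*ξ0) < 0) :
    alignScore p (K+1) mt (Fin.cons b0 rhat) < alignScore p (K+1) mt (Fin.cons (!b0) rhat) := by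
  set Δ := ‖ν2 - ν1‖ with hΔdef
  have hd0a : dist (mt 0 b0) ν1 ≤ ξ0 := by rwa [dist_eq_norm]
  have hd0b : dist (mt 0 (!b0)) ν2 ≤ ξ0 := by rwa [dist_eq_norm]
  let g : Fin K → ℝ := fun k =>
    (‖mt 0 b0 - mt k.succ (rhat k)‖ + ‖mt 0 (!b0) - mt k.succ (!(rhat k))‖)
    - (‖mt 0 (!b0) - mt k.succ (rhat k)‖ + ‖mt 0 b0 - mt k.succ (!(rhat k))‖)
  have hgsum : ∑ k : Fin K, g k
      = (∑ k : Fin K, ‖mt 0 b0 - mt k.succ (rhat k)‖)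
        + (∑ k : Fin K, ‖mt 0 (!b0) - mt k.succ (!(rhat k))‖)
        - (∑ k : Fin K, ‖mt 0 (!b0) - mt k.succ (rhat k)‖)
        - (∑ k : Fin K, ‖mt 0 b0 - mt k.succ (!(rhat k))‖) := by
    simp only [g, Finset.sum_sub_distrib, Finset.sum_add_distrib]
    ring
  have hdiff : alignScore p (K+1) mt (Fin.cons b0 rhat)
      - alignScore p (K+1) mt (Fin.cons (!b0) rhat) = 2 * ∑ k : Fin K, g k := by
    rw [score_decomp_aux, score_decomp_aux, Bool.not_not, hgsum]
    ring
  have hgS : ∀ k ∈ S, g k ≤ 4*ξ0 + 4*η - 2*Δ := by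
    intro k hk
    have ha := hSa k hk; have hb := hSb k hk
    have hda : dist (mt k.succ (rhat k)) ν1 ≤ η := by rwa [dist_eq_norm]
    have hdb : dist (mt k.succ (!(rhat k))) ν2 ≤ η := by rwa [dist_eq_norm]
    have t1 : dist (mt 0 b0) (mt k.succ (rhat k)) ≤ ξ0 + η := by
      calc dist (mt 0 b0) (mt k.succ (rhat k))
          ≤ dist (mt 0 b0) ν1 + dist ν1 (mt k.succ (rhat k)) := dist_triangle _ _ _
        _ ≤ ξ0 + η := add_le_add hd0a (by rw [dist_comm]; exact hda)
    have t2 : dist (mt 0 (!b0)) (mt k.succ (!(rhat k))) ≤ ξ0 + η := by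
      calc dist (mt 0 (!b0)) (mt k.succ (!(rhat k)))
          ≤ dist (mt 0 (!b0)) ν2 + dist ν2 (mt k.succ (!(rhat k))) := dist_triangle _ _ _
        _ ≤ ξ0 + η := add_le_add hd0b (by rw [dist_comm]; exact hdb)
    have t3 : Δ - ξ0 - η ≤ dist (mt 0 (!b0)) (mt k.succ (rhat k)) := by
      have h4 : dist ν2 ν1 ≤ dist ν2 (mt 0 (!b0)) + dist (mt 0 (!b0)) (mt k.succ (rhat k))
          + dist (mt k.succ (rhat k)) ν1 := dist_triangle4 _ _ _ _
      have hΔ : Δ = dist ν2 ν1 := (dist_eq_norm _ _).symm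
      rw [dist_comm ν2 (mt 0 (!b0))] at h4
      linarith [h4, hd0b, hda]
    have t4 : Δ - ξ0 - η ≤ dist (mt 0 b0) (mt k.succ (!(rhat k))) := by
      have h4 : dist ν1 ν2 ≤ dist ν1 (mt 0 b0) + dist (mt 0 b0) (mt k.succ (!(rhat k)))
          + dist (mt k.succ (!(rhat k))) ν2 := dist_triangle4 _ _ _ _
      have hΔ : Δ = dist ν1 ν2 := by rw [hΔdef, dist_eq_norm, norm_sub_rev]
      rw [dist_comm ν1 (mt 0 b0)] at h4
      linarith [h4, hd0a, hdb]
    simp only [g, ← dist_eq_norm]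
    linarith
  have hgN : ∀ k : Fin K, g k ≤ 2*Δ + 4*ξ0 := by
    intro k
    have hD0 : dist (mt 0 b0) (mt 0 (!b0)) ≤ ξ0 + Δ + ξ0 := by
      have h4 : dist (mt 0 b0) (mt 0 (!b0)) ≤ dist (mt 0 b0) ν1 + dist ν1 ν2
          + dist ν2 (mt 0 (!b0)) := dist_triangle4 _ _ _ _
      have hΔ : dist ν1 ν2 = Δ := by rw [hΔdef, dist_eq_norm, norm_sub_rev]
      rw [dist_comm ν2 (mt 0 (!b0))] at h4
      linarith [h4, hd0a, hd0b]
    have u1 : dist (mt 0 b0) (mt k.succ (rhat k)) ≤ dist (mt 0 b0) (mt 0 (!b0))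
        + dist (mt 0 (!b0)) (mt k.succ (rhat k)) := dist_triangle _ _ _
    have u2 : dist (mt 0 (!b0)) (mt k.succ (!(rhat k))) ≤ dist (mt 0 b0) (mt 0 (!b0))
        + dist (mt 0 b0) (mt k.succ (!(rhat k))) := by
      rw [dist_comm (mt 0 b0) (mt 0 (!b0))]; exact dist_triangle _ _ _
    simp only [g, ← dist_eq_norm]
    linarith
  have hsum : ∑ k : Fin K, g k < 0 := by
    have hsplit : ∑ k : Fin K, g k = ∑ k ∈ S, g k + ∑ k ∈ (univ \ S), g k := by
      rw [add_comm, Finset.sum_sdiff (Finset.subset_univ S)]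
    have h1 : ∑ k ∈ S, g k ≤ (S.card : ℝ) * (4*ξ0 + 4*η - 2*Δ) := by
      calc ∑ k ∈ S, g k ≤ ∑ k ∈ S, (4*ξ0 + 4*η - 2*Δ) := Finset.sum_le_sum hgS
        _ = (S.card : ℝ) * (4*ξ0 + 4*η - 2*Δ) := by rw [Finset.sum_const, nsmul_eq_mul]
    have hcard : ((univ \ S).card : ℝ) = (K : ℝ) - S.card := by
      rw [Finset.card_sdiff_of_subset (Finset.subset_univ S), Nat.cast_sub (by
        simpa using Finset.card_le_univ S)]
      simp
    have h2 : ∑ k ∈ (univ \ S), g k ≤ ((K : ℝ) - S.card) * (2*Δ + 4*ξ0) := by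
      calc ∑ k ∈ (univ \ S), g k ≤ ∑ k ∈ (univ \ S), (2*Δ + 4*ξ0) :=
            Finset.sum_le_sum (fun k _ => hgN k)
        _ = ((K : ℝ) - S.card) * (2*Δ + 4*ξ0) := by
            rw [Finset.sum_const, nsmul_eq_mul, hcard]
    rw [hsplit]; linarith
  linarith [hdiff, hsum]

lemma arith_aux (s Kr α hμ ξ0 Δ : ℝ) (hs : 1 ≤ s) (hK : s ≤ Kr) (hα0 : 0 < α)
    (hα1 : α ≤ 1/2) (heps : (Kr - s)/s < 1/2 - α) (hhμ : 0 ≤ hμ) (hξ : 0 ≤ ξ0)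
    (h1 : 8/α*hμ < Δ) (h2 : (4*((Kr - s)/s)+8)/α*ξ0 < Δ) :
    s * (4*ξ0 + 4*(ξ0+hμ) - 2*Δ) + (Kr - s) * (2*Δ + 4*ξ0) < 0 := by
  have hs0 : 0 < s := by linarith
  have e1 : Kr - s < s*(1/2 - α) := by
    rw [div_lt_iff₀ hs0] at heps; linarith
  have e2 : 8*hμ < Δ*α := by
    rw [div_mul_eq_mul_div, div_lt_iff₀ hα0] at h1; linarith
  have e3 : (4*((Kr-s)/s)+8)*ξ0 < Δ*α := by
    rw [div_mul_eq_mul_div, div_lt_iff₀ hα0] at h2; linarith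
  have e3' : (4*(Kr-s)+8*s)*ξ0 < Δ*α*s := by
    have h := mul_lt_mul_of_pos_right e3 hs0
    have heq : (4*((Kr-s)/s)+8)*ξ0*s = (4*(Kr-s)+8*s)*ξ0 := by
      field_simp
    rwa [heq] at h
  have hΔ : 0 < Δ := lt_of_le_of_lt (by positivity) h1
  nlinarith [mul_lt_mul_of_pos_left e1 (by linarith : (0:ℝ) < 2*Δ),
    mul_lt_mul_of_pos_right e2 hs0, e3', mul_pos hΔ hs0,
    mul_nonneg hhμ hs0.le, mul_nonneg hξ hs0.le]

/-- **Theorem 9 (correctness of label swapping for transfer learning).**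
Task `0 : Fin (K+1)` is the target; source task `k : Fin K` is `k.succ`. -/
theorem tl_label_swapping_correct
    (p K : ℕ) (S : Finset (Fin K)) (hS : 1 ≤ S.card)
    (mt : Fin (K + 1) → Bool → E p) (μ1s μ2s : Fin (K + 1) → E p)
    (r : Fin (K + 1) → Bool)
    (hμ ξ0 : ℝ) (hhμ : 0 ≤ hμ) (hξ : 0 ≤ ξ0)
    (hcen : ∀ k ∈ S, ‖μ1s k.succ - μ1s 0‖ ≤ hμ ∧ ‖μ2s k.succ - μ2s 0‖ ≤ hμ)
    (hinit : ∀ j : Fin (K + 1), (j = 0 ∨ ∃ k ∈ S, j = k.succ) →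
      ‖mt j (r j) - μ1s j‖ ≤ ξ0 ∧ ‖mt j (!r j) - μ2s j‖ ≤ ξ0)
    (α : ℝ) (hα0 : 0 < α) (hα1 : α ≤ 1 / 2)
    (heps : ((K : ℝ) - S.card) / S.card < 1 / 2 - α)
    (hsep : max (8 / α * hμ) ((4 * (((K : ℝ) - S.card) / S.card) + 8) / α * ξ0) <
      ‖μ2s 0 - μ1s 0‖)
    (rhat : Fin K → Bool)
    (hsrc : (∀ k ∈ S, rhat k = r k.succ) ∨ (∀ k ∈ S, rhat k = !r k.succ)) :
    letI A : Fin (K + 1) → Bool := Fin.cons false rhat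
    letI A' : Fin (K + 1) → Bool := Fin.cons true rhat
    letI out : Fin (K + 1) → Bool :=
      if alignScore p (K + 1) mt A' < alignScore p (K + 1) mt A then A' else A
    (∀ j : Fin (K + 1), (j = 0 ∨ ∃ k ∈ S, j = k.succ) → out j = r j) ∨
    (∀ j : Fin (K + 1), (j = 0 ∨ ∃ k ∈ S, j = k.succ) → out j = !r j) := by
  have hs1 : (1:ℝ) ≤ S.card := by exact_mod_cast hS
  have hsK : (S.card : ℝ) ≤ K := by
    exact_mod_cast (by simpa using Finset.card_le_univ S : S.card ≤ K)
  have hΔ1 : 8 / α * hμ < ‖μ2s 0 - μ1s 0‖ := lt_of_le_of_lt (le_max_left _ _) hsep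
  have hΔ2 : (4 * (((K:ℝ) - S.card) / S.card) + 8) / α * ξ0 < ‖μ2s 0 - μ1s 0‖ :=
    lt_of_le_of_lt (le_max_right _ _) hsep
  have hnum0 : (S.card : ℝ) * (4*ξ0 + 4*(ξ0+hμ) - 2*‖μ2s 0 - μ1s 0‖)
      + ((K : ℝ) - S.card) * (2*‖μ2s 0 - μ1s 0‖ + 4*ξ0) < 0 :=
    arith_aux _ _ _ _ _ _ hs1 hsK hα0 hα1 heps hhμ hξ hΔ1 hΔ2
  have key : ∀ b0 : Bool, alignScore p (K+1) mt (Fin.cons b0 rhat)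
      < alignScore p (K+1) mt (Fin.cons (!b0) rhat) →
      (if alignScore p (K+1) mt (Fin.cons true rhat)
          < alignScore p (K+1) mt (Fin.cons false rhat)
        then (Fin.cons true rhat : Fin (K+1) → Bool)
        else (Fin.cons false rhat : Fin (K+1) → Bool))
        = (Fin.cons b0 rhat : Fin (K+1) → Bool) := by
    intro b0 hlt
    cases b0 with
    | false =>
      simp only [Bool.not_false] at hlt
      rw [if_neg (not_lt.2 (le_of_lt hlt))]
    | true =>
      simp only [Bool.not_true] at hlt
      rw [if_pos hlt]
  have h0 := hinit 0 (Or.inl rfl)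
  rcases hsrc with hsrc | hsrc
  · -- aligned case
    have hcore : alignScore p (K+1) mt (Fin.cons (r 0) rhat)
        < alignScore p (K+1) mt (Fin.cons (!(r 0)) rhat) := by
      refine core_aux p K S mt (μ1s 0) (μ2s 0) rhat (r 0) ξ0 (ξ0 + hμ) h0.1 h0.2 ?_ ?_ hnum0
      · intro k hk
        have hi := (hinit k.succ (Or.inr ⟨k, hk, rfl⟩)).1
        have hc := (hcen k hk).1
        rw [hsrc k hk]
        exact (tri_aux _ (μ1s k.succ) _).trans (add_le_add hi hc)
      · intro k hk
        have hi := (hinit k.succ (Or.inr ⟨k, hk, rfl⟩)).2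
        have hc := (hcen k hk).2
        rw [hsrc k hk]
        exact (tri_aux _ (μ2s k.succ) _).trans (add_le_add hi hc)
    have hout := key (r 0) hcore
    left
    intro j hj
    rcases hj with rfl | ⟨k, hk, rfl⟩
    · rw [hout]; exact Fin.cons_zero _ _
    · rw [hout, Fin.cons_succ]; exact hsrc k hk
  · -- flipped case
    have hcore : alignScore p (K+1) mt (Fin.cons (!(r 0)) rhat)
        < alignScore p (K+1) mt (Fin.cons (!(!(r 0))) rhat) := by
      have hnum0' : (S.card : ℝ) * (4*ξ0 + 4*(ξ0+hμ) - 2*‖μ1s 0 - μ2s 0‖)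
          + ((K : ℝ) - S.card) * (2*‖μ1s 0 - μ2s 0‖ + 4*ξ0) < 0 := by
        rw [norm_sub_rev]; exact hnum0
      refine core_aux p K S mt (μ2s 0) (μ1s 0) rhat (!(r 0)) ξ0 (ξ0 + hμ) h0.2 ?_ ?_ ?_ hnum0'
      · rw [Bool.not_not]; exact h0.1
      · intro k hk
        have hi := (hinit k.succ (Or.inr ⟨k, hk, rfl⟩)).2
        have hc := (hcen k hk).2
        rw [hsrc k hk]
        exact (tri_aux _ (μ2s k.succ) _).trans (add_le_add hi hc)
      · intro k hk
        have hi := (hinit k.succ (Or.inr ⟨k, hk, rfl⟩)).1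
        have hc := (hcen k hk).1
        rw [hsrc k hk, Bool.not_not]
        exact (tri_aux _ (μ1s k.succ) _).trans (add_le_add hi hc)
    have hout := key (!(r 0)) hcore
    right
    intro j hj
    rcases hj with rfl | ⟨k, hk, rfl⟩
    · rw [hout]; exact Fin.cons_zero _ _
    · rw [hout, Fin.cons_succ]; exact hsrc k hk
end GMMAlign
end
end

section
/- Contraction-basin inequalities (Lemma U1). Let p >= 1, c_Sigma >= 1, C_b > 0 and c_1 with max( (3/2) C_b sqrt(c_Sigma) + C_b^2 + 1/2, C_b sqrt(c_Sigma) + C_b^2 c_Sigma + C_b c_Sigma^{3/2} ) < c_1 < 1. Let thetabar* = (w*, mu1*, mu2*, Sigma*) be in the single-GMM parameter space ThetaBar, set beta* = (Sigma*)^{-1}(mu1* - mu2*) and Delta = ((mu1*-mu2*)^T (Sigma*)^{-1}(mu1*-mu2*))^{1/2}, and assume Delta > 0. If mu1, mu2, beta in R^p satisfy ||mu1 - mu1*||_2 <= C_b Delta, ||mu2 - mu2*||_2 <= C_b Delta and ||beta - beta*||_2 <= C_b Delta, then |beta^T (mu1* - (mu1+mu2)/2)| > (1 - c_1) Delta^2,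 |beta^T (mu2* - (mu1+mu2)/2)| > (1 - c_1) Delta^2, and beta^T Sigma* beta < (1 + c_1) Delta^2. -/
open MeasureTheory ProbabilityTheory Matrix Finset
open scoped RealInnerProductSpace Classical ENNReal NNReal

noncomputable section

namespace GMM

/-- Euclidean space `ℝ^p`. -/
abbrev E (p : ℕ) := EuclideanSpace ℝ (Fin p)

/-- Reinterpret a plain function as an element of Euclidean space. -/
def toE (p : ℕ) (v : Fin p → ℝ) : E p := WithLp.toLp 2 v

/-- Density of the multivariate Gaussian `N(μ, Σ)`. -/
def gaussDensity (p : ℕ) (μ : E p) (S : Matrix (Fin p) (Fin p) ℝ) (z : E p) : ℝ :=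
  (2 * Real.pi) ^ (-(p : ℝ) / 2) * S.det ^ (-(1 : ℝ) / 2) *
    Real.exp (-((fun i => z i - μ i) ⬝ᵥ (S⁻¹ *ᵥ fun i => z i - μ i)) / 2)

/-- The multivariate Gaussian measure `N(μ, Σ)` on `ℝ^p`. -/
def gaussian (p : ℕ) (μ : E p) (S : Matrix (Fin p) (Fin p) ℝ) : Measure (E p) :=
  volume.withDensity fun z => ENNReal.ofReal (gaussDensity p μ S z)

/-- Parameter of a binary GMM: mixing weight, the two means, covariance. -/
structure GMMParam (p : ℕ) where
  w : ℝ
  μ1 : E p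
  μ2 : E p
  Cov : Matrix (Fin p) (Fin p) ℝ

/-- Discriminant coefficient `β = Σ⁻¹ (μ1 - μ2)`. -/
def GMMParam.β {p : ℕ} (θ : GMMParam p) : E p :=
  toE p (θ.Cov⁻¹ *ᵥ fun i => θ.μ1 i - θ.μ2 i)

/-- Signal strength `Δ = ((μ1-μ2)ᵀ Σ⁻¹ (μ1-μ2))^{1/2}`. -/
def GMMParam.Δ {p : ℕ} (θ : GMMParam p) : ℝ :=
  Real.sqrt ((fun i => θ.μ1 i - θ.μ2 i) ⬝ᵥ (θ.Cov⁻¹ *ᵥ fun i => θ.μ1 i - θ.μ2 i))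

/-- Marginal law of `Z`: the two-component Gaussian mixture. -/
def gmmMix (p : ℕ) (θ : GMMParam p) : Measure (E p) :=
  ENNReal.ofReal (1 - θ.w) • gaussian p θ.μ1 θ.Cov + ENNReal.ofReal θ.w • gaussian p θ.μ2 θ.Cov

/-- Eigenvalue bounds `cS⁻¹ ≤ λmin(A) ≤ λmax(A) ≤ cS` (for a symmetric matrix),
expressed through the quadratic form. -/
def SpecBounds (p : ℕ) (cS : ℝ) (A : Matrix (Fin p) (Fin p) ℝ) : Prop :=
  A.IsSymm ∧ ∀ v : Fin p → ℝ,
    cS⁻¹ * (v ⬝ᵥ v) ≤ v ⬝ᵥ (A *ᵥ v) ∧ v ⬝ᵥ (A *ᵥ v) ≤ cS * (v ⬝ᵥ v)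

/-- The single-GMM parameter space `ΘBar`. -/
def InThetaBar (p : ℕ) (Mμ cw cS : ℝ) (θ : GMMParam p) : Prop :=
  ‖θ.μ1‖ ≤ Mμ ∧ ‖θ.μ2‖ ≤ Mμ ∧ cw < θ.w ∧ θ.w < 1 - cw ∧ SpecBounds p cS θ.Cov

/-- The four GMM parameters `(w, μ1, μ2, β)` that are estimated. -/
structure GMMTheta (p : ℕ) where
  w : ℝ
  μ1 : E p
  μ2 : E p
  β : E p

def GMMParam.toTheta {p : ℕ} (θ : GMMParam p) : GMMTheta p := ⟨θ.w, θ.μ1, θ.μ2, θ.β⟩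

/-- The distance `d` between parameter quadruples. -/
def dist4 {p : ℕ} (a b : GMMTheta p) : ℝ :=
  max (max |a.w - b.w| ‖a.μ1 - b.μ1‖) (max ‖a.μ2 - b.μ2‖ ‖a.β - b.β‖)

/-- Operator (spectral) norm of a matrix. -/
def opNorm (p : ℕ) (A : Matrix (Fin p) (Fin p) ℝ) : ℝ :=
  ⨆ v : {v : Fin p → ℝ // ‖toE p v‖ ≤ 1}, ‖toE p (A *ᵥ v.1)‖


/-- Dot product equals the Euclidean inner product. -/
lemma dot_eq_inner {p : ℕ} (v w : Fin p → ℝ) : v ⬝ᵥ w = ⟪toE p v, toE p w⟫ := by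
  simp [dotProduct, toE, PiLp.inner_apply, RCLike.inner_apply, conj_trivial, mul_comm]

lemma dot_self_nonneg' {p : ℕ} (v : Fin p → ℝ) : 0 ≤ v ⬝ᵥ v :=
  Finset.sum_nonneg fun i _ => mul_self_nonneg _

lemma dot_self_pos {p : ℕ} (v : Fin p → ℝ) (hv : v ≠ 0) : 0 < v ⬝ᵥ v := by
  rw [dot_eq_inner, real_inner_self_eq_norm_sq]
  have h : toE p v ≠ 0 := fun h0 => hv (by simpa [toE] using congrArg WithLp.ofLp h0)
  exact pow_pos (norm_pos_iff.mpr h) 2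

/-- Cauchy–Schwarz for a symmetric PSD bilinear form. -/
lemma cs_psd {p : ℕ} (A : Matrix (Fin p) (Fin p) ℝ)
    (hsym : ∀ u v : Fin p → ℝ, u ⬝ᵥ (A *ᵥ v) = v ⬝ᵥ (A *ᵥ u))
    (hpsd : ∀ v : Fin p → ℝ, 0 ≤ v ⬝ᵥ (A *ᵥ v)) (u v : Fin p → ℝ) :
    (u ⬝ᵥ (A *ᵥ v))^2 ≤ (u ⬝ᵥ (A *ᵥ u)) * (v ⬝ᵥ (A *ᵥ v)) := by
  have key : ∀ t : ℝ, 0 ≤ (v ⬝ᵥ (A *ᵥ v)) * (t * t) + (2 * (u ⬝ᵥ (A *ᵥ v))) * t + (u ⬝ᵥ (A *ᵥ u)) := by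
    intro t
    have h := hpsd (u + t • v)
    have expand : (u + t • v) ⬝ᵥ (A *ᵥ (u + t • v)) =
        (v ⬝ᵥ (A *ᵥ v)) * (t * t) + (2 * (u ⬝ᵥ (A *ᵥ v))) * t + (u ⬝ᵥ (A *ᵥ u)) := by
      simp only [Matrix.mulVec_add, Matrix.mulVec_smul, add_dotProduct,
        dotProduct_add, smul_dotProduct, dotProduct_smul, smul_eq_mul]
      rw [hsym v u]; ring
    linarith [expand ▸ h]
  have h2 := discrim_le_zero key
  rw [discrim] at h2
  nlinarith [h2]

set_option maxHeartbeats 2000000 in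
/-- **Lemma U1 (contraction-basin inequalities).** -/
theorem contraction_basin_inequalities
    (p : ℕ) (hp : 1 ≤ p) (Mμ cw cS Cb c1 : ℝ)
    (hM : 0 < Mμ) (hcw0 : 0 < cw) (hcw1 : cw ≤ 1 / 2) (hcS : 1 ≤ cS) (hCb : 0 < Cb)
    (hc1lo : max (3 / 2 * Cb * Real.sqrt cS + Cb ^ 2 + 1 / 2)
        (Cb * Real.sqrt cS + Cb ^ 2 * cS + Cb * (cS * Real.sqrt cS)) < c1)
    (hc1hi : c1 < 1)
    (θ : GMMParam p) (hθ : InThetaBar p Mμ cw cS θ) (hΔ : 0 < θ.Δ)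
    (μ1 μ2 βv : E p)
    (h1 : ‖μ1 - θ.μ1‖ ≤ Cb * θ.Δ) (h2 : ‖μ2 - θ.μ2‖ ≤ Cb * θ.Δ)
    (h3 : ‖βv - θ.β‖ ≤ Cb * θ.Δ) :
    (1 - c1) * θ.Δ ^ 2 < |⟪βv, θ.μ1 - (2 : ℝ)⁻¹ • (μ1 + μ2)⟫| ∧
    (1 - c1) * θ.Δ ^ 2 < |⟪βv, θ.μ2 - (2 : ℝ)⁻¹ • (μ1 + μ2)⟫| ∧
    (fun i => βv i) ⬝ᵥ (θ.Cov *ᵥ fun i => βv i) < (1 + c1) * θ.Δ ^ 2 := by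
  obtain ⟨-, -, -, -, hSym, hbd⟩ := hθ
  have hcS0 : (0:ℝ) < cS := lt_of_lt_of_le one_pos hcS
  set s := Real.sqrt cS with hsdef
  have hs0 : 0 < s := Real.sqrt_pos.mpr hcS0
  have hs2 : s ^ 2 = cS := Real.sq_sqrt hcS0.le
  have hs1 : 1 ≤ s := by
    rw [hsdef, ← Real.sqrt_one]
    exact Real.sqrt_le_sqrt hcS
  have hsd : ∀ u v : Fin p → ℝ, u ⬝ᵥ (θ.Cov *ᵥ v) = v ⬝ᵥ (θ.Cov *ᵥ u) := fun u v => by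
    rw [Matrix.dotProduct_mulVec, ← Matrix.mulVec_transpose, hSym.eq, dotProduct_comm]
  have hpos : ∀ v : Fin p → ℝ, 0 ≤ v ⬝ᵥ (θ.Cov *ᵥ v) := fun v =>
    le_trans (mul_nonneg (inv_nonneg.mpr hcS0.le) (dot_self_nonneg' v)) (hbd v).1
  have hpd : θ.Cov.PosDef := by
    refine Matrix.posDef_iff_dotProduct_mulVec.mpr ⟨?_, fun ⦃x⦄ hx => ?_⟩
    · rw [Matrix.IsHermitian, conjTranspose]
      ext i j
      simpa using congrFun (congrFun hSym i) j
    · have h0 : 0 < cS⁻¹ * (x ⬝ᵥ x) := mul_pos (inv_pos.mpr hcS0) (dot_self_pos x hx)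
      simpa using lt_of_lt_of_le h0 (hbd x).1
  have hinv : θ.Cov * θ.Cov⁻¹ = 1 :=
    Matrix.mul_nonsing_inv _ (isUnit_iff_ne_zero.mpr hpd.det_pos.ne')
  set d : Fin p → ℝ := fun i => θ.μ1 i - θ.μ2 i with hddef
  set b : Fin p → ℝ := θ.Cov⁻¹ *ᵥ d with hbdef
  set q : ℝ := d ⬝ᵥ (θ.Cov⁻¹ *ᵥ d) with hqdef
  have hΔq : θ.Δ = Real.sqrt q := by
    simp only [GMMParam.Δ]; rfl
  have hβb : θ.β = toE p b := by
    simp only [GMMParam.β]; rfl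
  have hΔ0 : 0 < θ.Δ := hΔ
  have hq0 : 0 < q := Real.sqrt_pos.mp (by rw [← hΔq]; exact hΔ)
  have hΔ2 : θ.Δ ^ 2 = q := by rw [hΔq]; exact Real.sq_sqrt hq0.le
  have hqb : q = d ⬝ᵥ b := by rw [hqdef, hbdef]
  clear_value s d b q
  have hSb : θ.Cov *ᵥ b = d := by
    rw [hbdef, Matrix.mulVec_mulVec, hinv, Matrix.one_mulVec]
  have hbSb : b ⬝ᵥ (θ.Cov *ᵥ b) = q := by
    rw [hSb, dotProduct_comm, ← hqb]
  have hβn2 : ‖θ.β‖ ^ 2 = b ⬝ᵥ b := by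
    rw [hβb, dot_eq_inner, real_inner_self_eq_norm_sq]
  have hcc : cS * cS⁻¹ = 1 := mul_inv_cancel₀ hcS0.ne'
  have hbb : b ⬝ᵥ b ≤ cS * q := by
    have h := mul_le_mul_of_nonneg_left (hbd b).1 hcS0.le
    rwa [← mul_assoc, hcc, one_mul, hbSb] at h
  have hsq : (s * θ.Δ) ^ 2 = cS * q := by rw [mul_pow, hs2, hΔ2]
  have hβnorm : ‖θ.β‖ ≤ s * θ.Δ := by
    have h2 : ‖θ.β‖ ^ 2 ≤ (s * θ.Δ) ^ 2 := by rw [hβn2, hsq]; exact hbb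
    exact (pow_le_pow_iff_left₀ (norm_nonneg _) (by positivity) two_ne_zero).mp h2
  have hdE : toE p d = θ.μ1 - θ.μ2 := by
    ext i
    rw [hddef]
    simp [toE]
  have hdn2 : ‖θ.μ1 - θ.μ2‖ ^ 2 = d ⬝ᵥ d := by
    rw [← hdE, dot_eq_inner, real_inner_self_eq_norm_sq]
  have hcs := cs_psd θ.Cov hsd hpos d b
  rw [hSb, dotProduct_comm b d, ← hqb] at hcs
  have hdd : d ⬝ᵥ d ≤ cS * q := by
    by_contra hcon
    push_neg at hcon
    have h1 : 0 < d ⬝ᵥ d := lt_trans (mul_pos hcS0 hq0) hcon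
    have h2 : (d ⬝ᵥ d) ^ 2 ≤ (cS * (d ⬝ᵥ d)) * q :=
      le_trans hcs (mul_le_mul_of_nonneg_right (hbd d).2 hq0.le)
    linarith [mul_pos (sub_pos.mpr hcon) h1]
  have hdnorm : ‖θ.μ1 - θ.μ2‖ ≤ s * θ.Δ := by
    have h2 : ‖θ.μ1 - θ.μ2‖ ^ 2 ≤ (s * θ.Δ) ^ 2 := by rw [hdn2, hsq]; exact hdd
    exact (pow_le_pow_iff_left₀ (norm_nonneg _) (by positivity) two_ne_zero).mp h2
  have ha0 : ⟪θ.β, θ.μ1 - θ.μ2⟫ = q := by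
    rw [← hdE, hβb, ← dot_eq_inner, dotProduct_comm, ← hqb]
  have hCbΔ : 0 < Cb * θ.Δ := mul_pos hCb hΔ0
  have he1 : |⟪βv - θ.β, θ.μ1 - θ.μ2⟫| ≤ (Cb * θ.Δ) * (s * θ.Δ) :=
    le_trans (abs_real_inner_le_norm _ _)
      (mul_le_mul h3 hdnorm (norm_nonneg _) hCbΔ.le)
  have hbvn : ‖βv‖ ≤ (s + Cb) * θ.Δ := by
    have h := norm_add_le (βv - θ.β) θ.β
    rw [sub_add_cancel] at h
    have he : (s + Cb) * θ.Δ = s * θ.Δ + Cb * θ.Δ := by ring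
    linarith
  have h1' : ‖θ.μ1 - μ1‖ ≤ Cb * θ.Δ := by rw [norm_sub_rev]; exact h1
  have h2' : ‖θ.μ2 - μ2‖ ≤ Cb * θ.Δ := by rw [norm_sub_rev]; exact h2
  have hsCb : 0 ≤ (s + Cb) * θ.Δ := by positivity
  have he2 : |⟪βv, θ.μ1 - μ1⟫| ≤ ((s + Cb) * θ.Δ) * (Cb * θ.Δ) :=
    le_trans (abs_real_inner_le_norm _ _)
      (mul_le_mul hbvn h1' (norm_nonneg _) hsCb)
  have he3 : |⟪βv, θ.μ2 - μ2⟫| ≤ ((s + Cb) * θ.Δ) * (Cb * θ.Δ) :=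
    le_trans (abs_real_inner_le_norm _ _)
      (mul_le_mul hbvn h2' (norm_nonneg _) hsCb)
  have hsub : ⟪βv - θ.β, θ.μ1 - θ.μ2⟫ = ⟪βv, θ.μ1 - θ.μ2⟫ - ⟪θ.β, θ.μ1 - θ.μ2⟫ :=
    inner_sub_left _ _ _
  have hc1a : 3 / 2 * Cb * s + Cb ^ 2 + 1 / 2 < c1 :=
    lt_of_le_of_lt (le_max_left _ _) hc1lo
  have hc1b : Cb * s + Cb ^ 2 * cS + Cb * (cS * s) < c1 :=
    lt_of_le_of_lt (le_max_right _ _) hc1lo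
  have hΔsq : 0 < θ.Δ ^ 2 := pow_pos hΔ0 2
  refine ⟨?_, ?_, ?_⟩
  · have hdec1 : θ.μ1 - (2 : ℝ)⁻¹ • (μ1 + μ2) =
        (2 : ℝ)⁻¹ • ((θ.μ1 - θ.μ2) + ((θ.μ1 - μ1) + (θ.μ2 - μ2))) := by
      module
    have hv1 : ⟪βv, θ.μ1 - (2 : ℝ)⁻¹ • (μ1 + μ2)⟫ =
        2⁻¹ * ((q + ⟪βv - θ.β, θ.μ1 - θ.μ2⟫) + (⟪βv, θ.μ1 - μ1⟫ + ⟪βv, θ.μ2 - μ2⟫)) := by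
      rw [hdec1, real_inner_smul_right, inner_add_right, inner_add_right, hsub, ha0]
      ring
    have key1 : (1 - c1) * θ.Δ ^ 2 < ⟪βv, θ.μ1 - (2 : ℝ)⁻¹ • (μ1 + μ2)⟫ := by
      rw [hv1]
      linarith [neg_abs_le ⟪βv - θ.β, θ.μ1 - θ.μ2⟫, neg_abs_le ⟪βv, θ.μ1 - μ1⟫,
        neg_abs_le ⟪βv, θ.μ2 - μ2⟫, he1, he2, he3, hΔ2,
        mul_pos (sub_pos.mpr hc1a) hΔsq]
    exact lt_of_lt_of_le key1 (le_abs_self _)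
  · have hdec2 : θ.μ2 - (2 : ℝ)⁻¹ • (μ1 + μ2) =
        (2 : ℝ)⁻¹ • (-(θ.μ1 - θ.μ2) + ((θ.μ1 - μ1) + (θ.μ2 - μ2))) := by
      module
    have hv2 : ⟪βv, θ.μ2 - (2 : ℝ)⁻¹ • (μ1 + μ2)⟫ =
        2⁻¹ * ((-(q + ⟪βv - θ.β, θ.μ1 - θ.μ2⟫)) + (⟪βv, θ.μ1 - μ1⟫ + ⟪βv, θ.μ2 - μ2⟫)) := by
      rw [hdec2, real_inner_smul_right, inner_add_right, inner_add_right, inner_neg_right,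
        hsub, ha0]
      ring
    have key2 : (1 - c1) * θ.Δ ^ 2 < -⟪βv, θ.μ2 - (2 : ℝ)⁻¹ • (μ1 + μ2)⟫ := by
      rw [hv2]
      linarith [neg_abs_le ⟪βv - θ.β, θ.μ1 - θ.μ2⟫, le_abs_self ⟪βv, θ.μ1 - μ1⟫,
        le_abs_self ⟪βv, θ.μ2 - μ2⟫, he1, he2, he3, hΔ2,
        mul_pos (sub_pos.mpr hc1a) hΔsq]
    exact lt_of_lt_of_le key2 (neg_le_abs _)
  · set r : Fin p → ℝ := fun i => βv i - b i with hrdef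
    have hrE : toE p r = βv - θ.β := by
      rw [hβb]
      ext i
      rw [hrdef]
      simp [toE]
    have hr2 : r ⬝ᵥ r = ‖βv - θ.β‖ ^ 2 := by
      rw [dot_eq_inner, hrE, real_inner_self_eq_norm_sq]
    have hrd : |r ⬝ᵥ d| ≤ (Cb * θ.Δ) * (s * θ.Δ) := by
      rw [dot_eq_inner, hrE, hdE]
      exact le_trans (abs_real_inner_le_norm _ _)
        (mul_le_mul h3 hdnorm (norm_nonneg _) hCbΔ.le)
    have hrr : r ⬝ᵥ r ≤ (Cb * θ.Δ) ^ 2 := by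
      rw [hr2]
      exact pow_le_pow_left₀ (norm_nonneg _) h3 2
    have hrSr : r ⬝ᵥ (θ.Cov *ᵥ r) ≤ cS * (Cb * θ.Δ) ^ 2 := by
      exact le_trans (hbd r).2 (mul_le_mul_of_nonneg_left hrr hcS0.le)
    have hbr : (fun i => βv i) = b + r := by
      funext i
      rw [Pi.add_apply, hrdef]
      ring
    have hexp : (fun i => βv i) ⬝ᵥ (θ.Cov *ᵥ fun i => βv i) =
        q + 2 * (r ⬝ᵥ d) + r ⬝ᵥ (θ.Cov *ᵥ r) := by
      rw [hbr, Matrix.mulVec_add, add_dotProduct, dotProduct_add,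
        dotProduct_add, hbSb, hsd b r, hSb]
      ring
    rw [hexp]
    have hA : r ⬝ᵥ d ≤ Cb * s * θ.Δ ^ 2 := by
      have h := le_trans (le_abs_self (r ⬝ᵥ d)) hrd
      linarith [h]
    have hcs1 : Cb * s * θ.Δ ^ 2 ≤ Cb * (cS * s) * θ.Δ ^ 2 := by
      have h0 : 0 ≤ (cS - 1) * (Cb * s * θ.Δ ^ 2) :=
        mul_nonneg (sub_nonneg.mpr hcS) (by positivity)
      linarith [h0]
    linarith [hA, hrSr, hΔ2, hcs1, mul_pos (sub_pos.mpr hc1b) hΔsq]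
end GMM
end
end

section
/- KL divergence bound in the mixing weight (Lemma: lem 8.4 with w). Fix an integer p >= 1, mu in R^p and c_w in (0,1/2]. For w in (c_w, 1-c_w), let P_w = (1-w) N(mu, I_p) + w N(-mu, I_p) be the two-component Gaussian mixture on R^p with identity covariance. Then for all w, w' in (c_w, 1-c_w), KL(P_w || P_{w'}) <= (w - w')^2 / (2 c_w^2). -/
open MeasureTheory ProbabilityTheory Matrix Finset
open scoped RealInnerProductSpace Classical ENNReal NNReal

noncomputable section

namespace GMM

/-- Kullback–Leibler divergence `∫ log (dP/dQ) dP` (for `P ≪ Q`). -/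
def klDiv {α : Type*} [MeasurableSpace α] (P Q : Measure α) : ℝ :=
  ∫ x, Real.log ((P.rnDeriv Q x).toReal) ∂P

/-- The mixture `P_w = (1-w) N(μ, I_p) + w N(-μ, I_p)` on `ℝ^p`. -/
def Pmix (p : ℕ) (μ : E p) (w : ℝ) : Measure (E p) :=
  gmmMix p ⟨w, μ, -μ, (1 : Matrix (Fin p) (Fin p) ℝ)⟩

/-! ### Auxiliary facts about the standard Gaussian density -/

/-- The standard Gaussian density with identity covariance. -/
def gphi (p : ℕ) (ν : E p) (z : E p) : ℝ :=
  (2 * Real.pi) ^ (-(p : ℝ) / 2) * Real.exp (-‖z - ν‖ ^ 2 / 2)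

lemma gaussDensity_one (p : ℕ) (ν : E p) : gaussDensity p ν 1 = gphi p ν := by
  funext z
  unfold gaussDensity gphi
  rw [Matrix.det_one, inv_one, Matrix.one_mulVec, Real.one_rpow, mul_one]
  congr 2
  rw [EuclideanSpace.norm_eq]
  rw [Real.sq_sqrt (by positivity)]
  simp only [dotProduct]
  congr 2
  apply Finset.sum_congr rfl
  intro i _
  have h : (z - ν) i = z i - ν i := rfl
  rw [h, Real.norm_eq_abs, sq_abs]
  ring

lemma gphi_pos (p : ℕ) (ν : E p) (z : E p) : 0 < gphi p ν z := by
  unfold gphi; positivity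

lemma gphi_continuous (p : ℕ) (ν : E p) : Continuous (gphi p ν) := by
  unfold gphi
  fun_prop

lemma gphi_integrable (p : ℕ) (ν : E p) : Integrable (gphi p ν) := by
  unfold gphi
  apply Integrable.const_mul
  have key : Integrable (fun v : E p => Real.exp (-‖v‖ ^ 2 / 2)) := by
    have h := (GaussianFourier.integrable_cexp_neg_mul_sq_norm_add
      (V := E p) (b := (1/2 : ℂ)) (by norm_num) 0 0).norm
    apply h.congr
    filter_upwards with v
    rw [Complex.norm_exp]
    congr 1
    simp [← Complex.ofReal_pow]
    ring
  have := key.comp_sub_right ν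
  exact this

lemma gphi_integral (p : ℕ) (ν : E p) : ∫ z, gphi p ν z = 1 := by
  unfold gphi
  rw [integral_const_mul]
  have h1 : ∫ z : E p, Real.exp (-‖z - ν‖ ^ 2 / 2) = ∫ z : E p, Real.exp (-‖z‖ ^ 2 / 2) := by
    have := integral_sub_right_eq_self (μ := (volume : Measure (E p)))
      (fun z => Real.exp (-‖z‖ ^ 2 / 2)) ν
    exact this
  rw [h1]
  have h2 : ∫ z : E p, Real.exp (-‖z‖ ^ 2 / 2) = (2 * Real.pi) ^ ((p : ℝ) / 2) := by
    have h := GaussianFourier.integral_rexp_neg_mul_sq_norm (V := E p)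
      (by norm_num : (0:ℝ) < 1/2)
    rw [finrank_euclideanSpace_fin] at h
    rw [show (fun z : E p => Real.exp (-‖z‖ ^ 2 / 2)) = fun z : E p =>
      Real.exp (-(1/2) * ‖z‖ ^ 2) by funext z; ring_nf] at *
    rw [h, show Real.pi / (1/2 : ℝ) = 2 * Real.pi by ring]
  rw [h2, ← Real.rpow_add (by positivity)]
  rw [show -(p:ℝ)/2 + (p:ℝ)/2 = 0 by ring, Real.rpow_zero]

/-- The mixture density. -/
def gmix (p : ℕ) (μ : E p) (w : ℝ) (z : E p) : ℝ :=
  (1 - w) * gphi p μ z + w * gphi p (-μ) z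

lemma gmix_measurable (p : ℕ) (μ : E p) (w : ℝ) : Measurable (gmix p μ w) := by
  unfold gmix
  exact (((gphi_continuous p μ).measurable.const_mul _).add
    (((gphi_continuous p (-μ)).measurable.const_mul _)))

lemma gmix_integrable (p : ℕ) (μ : E p) (w : ℝ) : Integrable (gmix p μ w) := by
  exact ((gphi_integrable p μ).const_mul _).add ((gphi_integrable p (-μ)).const_mul _)

lemma Pmix_eq (p : ℕ) (μ : E p) (w : ℝ) (hw0 : 0 ≤ w) (hw1 : w ≤ 1) :
    Pmix p μ w = volume.withDensity (fun z => ENNReal.ofReal (gmix p μ w z)) := by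
  unfold Pmix gmmMix gaussian
  simp only
  rw [gaussDensity_one, gaussDensity_one]
  have hm1 : Measurable (fun z => ENNReal.ofReal (gphi p μ z)) :=
    (gphi_continuous p μ).measurable.ennreal_ofReal
  have hm2 : Measurable (fun z => ENNReal.ofReal (gphi p (-μ) z)) :=
    (gphi_continuous p (-μ)).measurable.ennreal_ofReal
  rw [← withDensity_smul _ hm1, ← withDensity_smul _ hm2, ← withDensity_add_left]
  · congr 1
    funext z
    simp only [Pi.add_apply, Pi.smul_apply, smul_eq_mul]
    rw [← ENNReal.ofReal_mul (by linarith), ← ENNReal.ofReal_mul hw0,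
      ← ENNReal.ofReal_add (mul_nonneg (by linarith) (gphi_pos p μ z).le)
        (mul_nonneg hw0 (gphi_pos p (-μ) z).le)]
    · rfl
  · exact (Measurable.const_smul hm1 _)

lemma log_sum_two {x y u v : ℝ} (hx : 0 < x) (hy : 0 < y) (hu : 0 < u) (hv : 0 < v) :
    (x + y) * Real.log ((x + y) / (u + v)) ≤ x * Real.log (x / u) + y * Real.log (y / v) := by
  have hxy : 0 < x + y := by linarith
  have huv : 0 < u + v := by linarith
  have h1 : Real.log ((x + y) / (u + v)) - Real.log (x / u) =
      Real.log ((x + y) * u / ((u + v) * x)) := by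
    rw [Real.log_div (by positivity) (by positivity), Real.log_div (by positivity) (by positivity),
      Real.log_div (by positivity) (by positivity), Real.log_mul (by positivity) (by positivity),
      Real.log_mul (by positivity) (by positivity)]
    ring
  have h2 : Real.log ((x + y) / (u + v)) - Real.log (y / v) =
      Real.log ((x + y) * v / ((u + v) * y)) := by
    rw [Real.log_div (by positivity) (by positivity), Real.log_div (by positivity) (by positivity),
      Real.log_div (by positivity) (by positivity), Real.log_mul (by positivity) (by positivity),
      Real.log_mul (by positivity) (by positivity)]
    ring
  have b1 : Real.log ((x + y) * u / ((u + v) * x)) ≤ (x + y) * u / ((u + v) * x) - 1 :=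
    Real.log_le_sub_one_of_pos (by positivity)
  have b2 : Real.log ((x + y) * v / ((u + v) * y)) ≤ (x + y) * v / ((u + v) * y) - 1 :=
    Real.log_le_sub_one_of_pos (by positivity)
  have c1 : x * (Real.log ((x + y) / (u + v)) - Real.log (x / u)) ≤
      x * ((x + y) * u / ((u + v) * x) - 1) := by
    rw [h1]; exact mul_le_mul_of_nonneg_left b1 hx.le
  have c2 : y * (Real.log ((x + y) / (u + v)) - Real.log (y / v)) ≤
      y * ((x + y) * v / ((u + v) * y) - 1) := by
    rw [h2]; exact mul_le_mul_of_nonneg_left b2 hy.le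
  have key : x * ((x + y) * u / ((u + v) * x) - 1) + y * ((x + y) * v / ((u + v) * y) - 1) = 0 := by
    field_simp
    ring
  nlinarith [c1, c2]

lemma bern_kl_bound (cw w w' : ℝ) (hcw0 : 0 < cw) (_hcw1 : cw ≤ 1 / 2)
    (hw : cw < w) (hw' : w < 1 - cw) (hv : cw < w') (hv' : w' < 1 - cw) :
    (1 - w) * Real.log ((1 - w) / (1 - w')) + w * Real.log (w / w') ≤
      (w - w') ^ 2 / (2 * cw ^ 2) := by
  set F : ℝ → ℝ := fun t => (1 - w) * Real.log ((1 - w) / (1 - t)) + w * Real.log (w / t) with hFdef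
  have hw0 : 0 < w := lt_trans hcw0 hw
  have hsub : Set.uIcc w w' ⊆ Set.Icc cw (1 - cw) := by
    apply Set.uIcc_subset_Icc <;> constructor <;> linarith
  have hderiv : ∀ t ∈ Set.uIcc w w', HasDerivAt F ((t - w) / (t * (1 - t))) t := by
    intro t ht
    obtain ⟨ht0, ht1⟩ := hsub ht
    have ht0' : 0 < t := lt_of_lt_of_le hcw0 ht0
    have ht1' : t < 1 := by linarith
    have hG : HasDerivAt (fun s => (1 - w) * Real.log (1 - w) - (1 - w) * Real.log (1 - s)
        + (w * Real.log w - w * Real.log s)) ((1 - w) * (1 / (1 - t)) - w * (1 / t)) t := by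
      have d1 : HasDerivAt (fun s : ℝ => 1 - s) (-1) t := (hasDerivAt_id t).const_sub 1
      have d2 : HasDerivAt (fun s : ℝ => Real.log (1 - s)) (-1 / (1 - t)) t :=
        d1.log (by linarith)
      have d3 : HasDerivAt Real.log (1 / t) t := by
        simpa [one_div] using Real.hasDerivAt_log (ne_of_gt ht0')
      have hne1 : (1:ℝ) - t ≠ 0 := by linarith
      have hnet : t ≠ 0 := ne_of_gt ht0'
      have := ((d2.const_mul (1 - w)).const_sub ((1 - w) * Real.log (1 - w))).add
        ((d3.const_mul w).const_sub (w * Real.log w))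
      refine this.congr_deriv ?_
      ring
    have heq : F =ᶠ[nhds t] (fun s => (1 - w) * Real.log (1 - w) - (1 - w) * Real.log (1 - s)
        + (w * Real.log w - w * Real.log s)) := by
      have : Set.Ioo (0 : ℝ) 1 ∈ nhds t := Ioo_mem_nhds ht0' ht1'
      filter_upwards [this] with s hs
      obtain ⟨hs0, hs1⟩ := hs
      rw [hFdef]
      simp only
      rw [Real.log_div (by linarith) (by linarith), Real.log_div (ne_of_gt hw0) (ne_of_gt hs0)]
      ring
    have hne1 : (1:ℝ) - t ≠ 0 := by linarith
    have hnet : t ≠ 0 := ne_of_gt ht0'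
    have heq2 : (1 - w) * (1 / (1 - t)) - w * (1 / t) = (t - w) / (t * (1 - t)) := by
      field_simp
      ring
    rw [← heq2]
    exact hG.congr_of_eventuallyEq heq
  have hFw : F w = 0 := by
    rw [hFdef]; simp only
    rw [div_self (by linarith : (1:ℝ) - w ≠ 0), div_self (ne_of_gt hw0), Real.log_one]
    ring
  have hcont : ContinuousOn (fun t => (t - w) / (t * (1 - t))) (Set.uIcc w w') := by
    apply ContinuousOn.div
    · exact (continuous_id.sub continuous_const).continuousOn
    · exact (continuous_id.mul (continuous_const.sub continuous_id)).continuousOn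
    · intro t ht
      obtain ⟨ht0, ht1⟩ := hsub ht
      have : 0 < t * (1 - t) := by nlinarith
      exact ne_of_gt this
  have hii : IntervalIntegrable (fun t => (t - w) / (t * (1 - t))) volume w w' :=
    hcont.intervalIntegrable
  have hftc : ∫ t in w..w', (t - w) / (t * (1 - t)) = F w' - F w :=
    intervalIntegral.integral_eq_sub_of_hasDerivAt hderiv hii
  have hderiv2 : ∀ t ∈ Set.uIcc w w',
      HasDerivAt (fun s => (s - w) ^ 2 / (2 * cw ^ 2)) ((t - w) / cw ^ 2) t := by
    intro t _
    have h := (((hasDerivAt_id t).sub_const w).pow 2).div_const (2 * cw ^ 2)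
    refine h.congr_deriv ?_
    simp only [id]
    field_simp
    ring
  have hii2 : IntervalIntegrable (fun t => (t - w) / cw ^ 2) volume w w' :=
    ((continuous_id.sub continuous_const).div_const _).intervalIntegrable _ _
  have hftc2 : ∫ t in w..w', (t - w) / cw ^ 2
      = (w' - w) ^ 2 / (2 * cw ^ 2) - (w - w) ^ 2 / (2 * cw ^ 2) :=
    intervalIntegral.integral_eq_sub_of_hasDerivAt hderiv2 hii2
  have hcw2 : 0 < cw ^ 2 := by positivity
  have hptle : ∀ t ∈ Set.uIcc w w', cw ^ 2 ≤ t * (1 - t) := by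
    intro t ht
    obtain ⟨ht0, ht1⟩ := hsub ht
    nlinarith
  have hmain : ∫ t in w..w', (t - w) / (t * (1 - t)) ≤ ∫ t in w..w', (t - w) / cw ^ 2 := by
    rcases le_total w w' with hle | hle
    · apply intervalIntegral.integral_mono_on hle hii hii2
      intro t ht
      have ht' : t ∈ Set.uIcc w w' := Set.mem_uIcc_of_le ht.1 ht.2
      have h1 := hptle t ht'
      have h2 : 0 ≤ t - w := by linarith [ht.1]
      have h3 : 0 < t * (1 - t) := lt_of_lt_of_le hcw2 h1
      gcongr
    · rw [intervalIntegral.integral_symm, intervalIntegral.integral_symm w' w]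
      apply neg_le_neg
      apply intervalIntegral.integral_mono_on hle hii2.symm hii.symm
      intro t ht
      have ht' : t ∈ Set.uIcc w w' := by
        rw [Set.uIcc_comm]; exact Set.mem_uIcc_of_le ht.1 ht.2
      have h1 := hptle t ht'
      have h2 : t - w ≤ 0 := by linarith [ht.2]
      have h3 : 0 < t * (1 - t) := lt_of_lt_of_le hcw2 h1
      rw [div_le_div_iff₀ hcw2 h3]
      nlinarith
  have hfin : F w' ≤ (w' - w) ^ 2 / (2 * cw ^ 2) := by
    have h := hmain
    rw [hftc, hftc2, hFw] at h
    simpa using h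
  calc (1 - w) * Real.log ((1 - w) / (1 - w')) + w * Real.log (w / w') = F w' := rfl
    _ ≤ (w' - w) ^ 2 / (2 * cw ^ 2) := hfin
    _ = (w - w') ^ 2 / (2 * cw ^ 2) := by ring_nf

/-- **KL divergence bound in the mixing weight (Lemma 8.4-type bound).** -/
theorem klDiv_mixture_weight_bound
    (p : ℕ) (hp : 1 ≤ p) (μ : E p) (cw : ℝ) (hcw0 : 0 < cw) (hcw1 : cw ≤ 1 / 2)
    (w w' : ℝ) (hw : cw < w) (hw' : w < 1 - cw) (hv : cw < w') (hv' : w' < 1 - cw) :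
    klDiv (Pmix p μ w) (Pmix p μ w') ≤ (w - w') ^ 2 / (2 * cw ^ 2) := by
  have hw0 : 0 < w := lt_trans hcw0 hw
  have hw1 : w < 1 := by linarith
  have hv0 : 0 < w' := lt_trans hcw0 hv
  have hv1 : w' < 1 := by linarith
  have hapos : ∀ z, 0 < gphi p μ z := gphi_pos p μ
  have hbpos : ∀ z, 0 < gphi p (-μ) z := gphi_pos p (-μ)
  have hfw_pos : ∀ z, 0 < gmix p μ w z := fun z => by
    unfold gmix; nlinarith [hapos z, hbpos z]
  have hfv_pos : ∀ z, 0 < gmix p μ w' z := fun z => by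
    unfold gmix; nlinarith [hapos z, hbpos z]
  have hfw_low : ∀ z, cw * (gphi p μ z + gphi p (-μ) z) ≤ gmix p μ w z := fun z => by
    unfold gmix; nlinarith [hapos z, hbpos z]
  have hfw_up : ∀ z, gmix p μ w z ≤ gphi p μ z + gphi p (-μ) z := fun z => by
    unfold gmix; nlinarith [hapos z, hbpos z]
  have hfv_low : ∀ z, cw * (gphi p μ z + gphi p (-μ) z) ≤ gmix p μ w' z := fun z => by
    unfold gmix; nlinarith [hapos z, hbpos z]
  have hfv_up : ∀ z, gmix p μ w' z ≤ gphi p μ z + gphi p (-μ) z := fun z => by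
    unfold gmix; nlinarith [hapos z, hbpos z]
  have hmeas_fw : Measurable (gmix p μ w) := gmix_measurable p μ w
  have hmeas_fv : Measurable (gmix p μ w') := gmix_measurable p μ w'
  set r : E p → ℝ := fun z => gmix p μ w z / gmix p μ w' z with hrdef
  have hrpos : ∀ z, 0 < r z := fun z => div_pos (hfw_pos z) (hfv_pos z)
  have hmeas_r : Measurable r := hmeas_fw.div hmeas_fv
  rw [Pmix_eq p μ w hw0.le hw1.le, Pmix_eq p μ w' hv0.le hv1.le]
  set P := volume.withDensity (fun z => ENNReal.ofReal (gmix p μ w z)) with hPdef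
  set Q := volume.withDensity (fun z => ENNReal.ofReal (gmix p μ w' z)) with hQdef
  haveI : IsFiniteMeasure Q :=
    isFiniteMeasure_withDensity_ofReal (gmix_integrable p μ w').hasFiniteIntegral
  have hPQ : P = Q.withDensity (fun z => ENNReal.ofReal (r z)) := by
    rw [hQdef, ← withDensity_mul _ hmeas_fv.ennreal_ofReal hmeas_r.ennreal_ofReal, hPdef]
    congr 1
    funext z
    simp only [Pi.mul_apply]
    rw [← ENNReal.ofReal_mul (hfv_pos z).le]
    congr 1
    rw [hrdef]
    simp only
    rw [mul_comm, div_mul_cancel₀ _ (ne_of_gt (hfv_pos z))]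
  have hrn : P.rnDeriv Q =ᵐ[Q] fun z => ENNReal.ofReal (r z) := by
    rw [hPQ]
    exact Measure.rnDeriv_withDensity Q hmeas_r.ennreal_ofReal
  have hac : P ≪ Q := hPQ ▸ withDensity_absolutelyContinuous Q _
  have hrnP : P.rnDeriv Q =ᵐ[P] fun z => ENNReal.ofReal (r z) := hac.ae_le hrn
  have hkl : klDiv P Q = ∫ z, Real.log (r z) ∂P := by
    unfold klDiv
    apply integral_congr_ae
    filter_upwards [hrnP] with z hz
    rw [hz, ENNReal.toReal_ofReal (hrpos z).le]
  rw [hkl]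
  have hP_eq : ∫ z, Real.log (r z) ∂P = ∫ z, gmix p μ w z * Real.log (r z) := by
    have hmf : Measurable (fun z => (gmix p μ w z).toNNReal) := hmeas_fw.real_toNNReal
    have hPd : P = volume.withDensity (fun z => ((gmix p μ w z).toNNReal : ℝ≥0∞)) := rfl
    rw [hPd, integral_withDensity_eq_integral_smul hmf]
    apply integral_congr_ae
    filter_upwards with z
    rw [NNReal.smul_def, Real.coe_toNNReal _ (hfw_pos z).le, smul_eq_mul]
  rw [hP_eq]
  set α := Real.log ((1 - w) / (1 - w')) with hαdef
  set β := Real.log (w / w') with hβdef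
  have hpt : ∀ z, gmix p μ w z * Real.log (r z) ≤
      (1 - w) * gphi p μ z * α + w * gphi p (-μ) z * β := by
    intro z
    have key := log_sum_two (x := (1 - w) * gphi p μ z) (y := w * gphi p (-μ) z)
      (u := (1 - w') * gphi p μ z) (v := w' * gphi p (-μ) z)
      (by nlinarith [hapos z]) (by nlinarith [hbpos z])
      (by nlinarith [hapos z]) (by nlinarith [hbpos z])
    rw [mul_div_mul_right _ _ (ne_of_gt (hapos z)),
      mul_div_mul_right _ _ (ne_of_gt (hbpos z))] at key
    have e1 : (1 - w) * gphi p μ z + w * gphi p (-μ) z = gmix p μ w z := rfl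
    have e2 : (1 - w') * gphi p μ z + w' * gphi p (-μ) z = gmix p μ w' z := rfl
    rw [e1, e2] at key
    calc gmix p μ w z * Real.log (r z)
        ≤ (1 - w) * gphi p μ z * Real.log ((1 - w) / (1 - w'))
          + w * gphi p (-μ) z * Real.log (w / w') := key
      _ = (1 - w) * gphi p μ z * α + w * gphi p (-μ) z * β := by rw [hαdef, hβdef]
  have hlogcw : Real.log cw ≤ 0 := Real.log_nonpos hcw0.le (by linarith)
  have hrlb : ∀ z, cw ≤ r z := by
    intro z
    rw [hrdef]
    simp only
    rw [le_div_iff₀ (hfv_pos z)]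
    calc cw * gmix p μ w' z ≤ cw * (gphi p μ z + gphi p (-μ) z) :=
          mul_le_mul_of_nonneg_left (hfv_up z) hcw0.le
      _ ≤ gmix p μ w z := hfw_low z
  have hrub : ∀ z, r z ≤ cw⁻¹ := by
    intro z
    rw [hrdef]
    simp only
    rw [div_le_iff₀ (hfv_pos z)]
    have h1 : cw * (gphi p μ z + gphi p (-μ) z) ≤ gmix p μ w' z := hfv_low z
    have h2 : gmix p μ w z ≤ gphi p μ z + gphi p (-μ) z := hfw_up z
    have h3 : gphi p μ z + gphi p (-μ) z ≤ cw⁻¹ * gmix p μ w' z := by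
      rw [← mul_le_mul_iff_of_pos_left hcw0, ← mul_assoc, mul_inv_cancel₀ (ne_of_gt hcw0), one_mul]
      exact h1
    linarith
  have hlogbound : ∀ z, |Real.log (r z)| ≤ -Real.log cw := by
    intro z
    rw [abs_le]
    constructor
    · have := Real.log_le_log hcw0 (hrlb z)
      linarith
    · have := Real.log_le_log (hrpos z) (hrub z)
      rw [Real.log_inv] at this
      linarith
  have hIL : Integrable (fun z => gmix p μ w z * Real.log (r z)) := by
    apply Integrable.mono'
      (((gphi_integrable p μ).add (gphi_integrable p (-μ))).const_mul (-Real.log cw))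
    · exact (hmeas_fw.mul (Real.measurable_log.comp hmeas_r)).aestronglyMeasurable
    · filter_upwards with z
      rw [Real.norm_eq_abs, abs_mul, abs_of_pos (hfw_pos z)]
      calc gmix p μ w z * |Real.log (r z)| ≤ gmix p μ w z * (-Real.log cw) :=
            mul_le_mul_of_nonneg_left (hlogbound z) (hfw_pos z).le
        _ ≤ (gphi p μ z + gphi p (-μ) z) * (-Real.log cw) := by
            apply mul_le_mul_of_nonneg_right (hfw_up z)
            linarith
        _ = -Real.log cw * (gphi p μ z + gphi p (-μ) z) := by ring
  have hIa : Integrable (fun z => (1 - w) * gphi p μ z * α) :=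
    ((gphi_integrable p μ).const_mul (1 - w)).mul_const α
  have hIb : Integrable (fun z => w * gphi p (-μ) z * β) :=
    ((gphi_integrable p (-μ)).const_mul w).mul_const β
  have hmono : ∫ z, gmix p μ w z * Real.log (r z) ≤
      ∫ z, ((1 - w) * gphi p μ z * α + w * gphi p (-μ) z * β) :=
    integral_mono hIL (hIa.add hIb) hpt
  have hRHS : ∫ z, ((1 - w) * gphi p μ z * α + w * gphi p (-μ) z * β)
      = (1 - w) * α + w * β := by
    rw [integral_add hIa hIb]
    have e1 : (fun z => (1 - w) * gphi p μ z * α) = fun z => ((1 - w) * α) * gphi p μ z := by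
      funext z; ring
    have e2 : (fun z => w * gphi p (-μ) z * β) = fun z => (w * β) * gphi p (-μ) z := by
      funext z; ring
    rw [e1, e2, integral_const_mul, integral_const_mul, gphi_integral, gphi_integral]
    ring
  have hbern := bern_kl_bound cw w w' hcw0 hcw1 hw hw' hv hv'
  calc ∫ z, gmix p μ w z * Real.log (r z)
      ≤ ∫ z, ((1 - w) * gphi p μ z * α + w * gphi p (-μ) z * β) := hmono
    _ = (1 - w) * α + w * β := hRHS
    _ ≤ (w - w') ^ 2 / (2 * cw ^ 2) := hbern
end GMM
end
end

section
/- Penalized strongly convex minimization (Lemma: transfer lemma). Let p >= 1, let f : R^p -> R be convex and twice differentiable, and suppose there are 0 < rho <= L such that rho ||v||_2^2 <= v^T (Hessian of f at theta) v <= L ||v||_2^2 for all theta, v in R^p. Fix thetabar in R^p, n_0 > 0, lambda >= 0, and let theta_hat be a minimizer over R^p of theta -> f(theta) + (lambda/sqrt(n_0)) ||theta - thetabar||_2. Then: (i) for every theta* in R^p, ||theta_hat - theta*||_2 <= ||grad f(theta*)||_2 / rho + lambda/(rho sqrt(n_0)); (ii) if moreover lambda >= 2 sqrt(n_0) ||grad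 f(theta*)||_2 and ||thetabar - theta*||_2 <= (lambda/sqrt(n_0) - ||grad f(theta*)||_2)/L for some theta* in R^p, then theta_hat = thetabar. -/
noncomputable section

open InnerProductSpace RealInnerProductSpace

/-- 1D second-order Taylor lower bound from a uniform lower bound on the second
derivative. -/
lemma aux1d_second_deriv_bound (g : ℝ → ℝ) (a : ℝ) (hg : Differentiable ℝ g)
    (hg' : Differentiable ℝ (deriv g))
    (hbound : ∀ t, a ≤ deriv (deriv g) t) :
    g 0 + deriv g 0 + a / 2 ≤ g 1 := by
  have hψ : Monotone (fun t => deriv g t - a * t) := by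
    apply monotone_of_deriv_nonneg
    · exact hg'.sub (differentiable_id.const_mul a)
    · intro t
      have h1 : HasDerivAt (fun t => deriv g t - a * t)
          (deriv (deriv g) t - a) t :=
        (hg' t).hasDerivAt.sub (((hasDerivAt_id t).const_mul a).congr_deriv (by ring))
      rw [h1.deriv]
      linarith [hbound t]
  have hGd : ∀ t : ℝ, HasDerivAt (fun t => g t - deriv g 0 * t - a / 2 * t ^ 2)
      (deriv g t - deriv g 0 - a * t) t := by
    intro t
    have h2 : HasDerivAt (fun t : ℝ => a / 2 * t ^ 2) (a * t) t := by
      have := (hasDerivAt_pow 2 t).const_mul (a / 2)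
      exact this.congr_deriv (by ring)
    exact ((hg t).hasDerivAt.sub ((hasDerivAt_id t).const_mul (deriv g 0) |>.congr_deriv
      (by ring))).sub h2
  have hG : MonotoneOn (fun t => g t - deriv g 0 * t - a / 2 * t ^ 2) (Set.Ici (0:ℝ)) := by
    apply monotoneOn_of_deriv_nonneg (convex_Ici 0)
    · exact (Differentiable.continuous (fun t => (hGd t).differentiableAt)).continuousOn
    · intro t _; exact (hGd t).differentiableAt.differentiableWithinAt
    · intro t ht
      rw [(hGd t).deriv]
      have := hψ (le_of_lt (by simpa using ht) : (0:ℝ) ≤ t)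
      simp only [mul_zero, sub_zero] at this
      linarith
  have := hG Set.self_mem_Ici (by norm_num : (1:ℝ) ∈ Set.Ici 0) zero_le_one
  norm_num at this
  linarith

/-- The `fderiv` applied to a vector equals the inner product with the gradient. -/
lemma grad_inner_eq {p : ℕ} (f : EuclideanSpace ℝ (Fin p) → ℝ)
    (x v : EuclideanSpace ℝ (Fin p)) :
    fderiv ℝ f x v = ⟪gradient f x, v⟫_ℝ := by
  rw [gradient, InnerProductSpace.toDual_symm_apply]

/-- Two-sided second-order Taylor bounds from the Hessian bounds. -/
lemma key_taylor {p : ℕ} (f : EuclideanSpace ℝ (Fin p) → ℝ) (ρ L : ℝ)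
    (hsmooth : ContDiff ℝ 2 f)
    (hhess : ∀ θ v : EuclideanSpace ℝ (Fin p),
      ρ * ‖v‖ ^ 2 ≤ iteratedFDeriv ℝ 2 f θ ![v, v] ∧
        iteratedFDeriv ℝ 2 f θ ![v, v] ≤ L * ‖v‖ ^ 2)
    (x v : EuclideanSpace ℝ (Fin p)) :
    f x + ⟪gradient f x, v⟫_ℝ + ρ / 2 * ‖v‖ ^ 2 ≤ f (x + v) ∧
      f (x + v) ≤ f x + ⟪gradient f x, v⟫_ℝ + L / 2 * ‖v‖ ^ 2 := by
  have hfd : Differentiable ℝ f := hsmooth.differentiable (by norm_num)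
  have hF : ContDiff ℝ 1 (fderiv ℝ f) := hsmooth.fderiv_right (by norm_num)
  have hline : ∀ t : ℝ, HasDerivAt (fun s : ℝ => x + s • v) v t := by
    intro t
    simpa using ((hasDerivAt_id t).smul_const v).const_add x
  set g : ℝ → ℝ := fun t => f (x + t • v) with hgdef
  have hg1 : ∀ t : ℝ, HasDerivAt g (fderiv ℝ f (x + t • v) v) t := by
    intro t
    exact (hfd _).hasFDerivAt.comp_hasDerivAt t (hline t)
  have hderivg : deriv g = fun t => fderiv ℝ f (x + t • v) v :=
    funext fun t => (hg1 t).deriv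
  have hg2 : ∀ t : ℝ, HasDerivAt (fun t : ℝ => fderiv ℝ f (x + t • v) v)
      (iteratedFDeriv ℝ 2 f (x + t • v) ![v, v]) t := by
    intro t
    have hc : HasDerivAt (fun t : ℝ => fderiv ℝ f (x + t • v))
        (fderiv ℝ (fderiv ℝ f) (x + t • v) v) t :=
      ((hF.differentiable one_ne_zero) _).hasFDerivAt.comp_hasDerivAt t (hline t)
    have h := hc.clm_apply (hasDerivAt_const t v)
    simpa [iteratedFDeriv_two_apply] using h
  have hgdiff : Differentiable ℝ g := fun t => (hg1 t).differentiableAt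
  have hg'diff : Differentiable ℝ (deriv g) := by
    rw [hderivg]; exact fun t => (hg2 t).differentiableAt
  have hdd : ∀ t : ℝ, deriv (deriv g) t = iteratedFDeriv ℝ 2 f (x + t • v) ![v, v] := by
    intro t; rw [hderivg]; exact (hg2 t).deriv
  have hg0 : g 0 = f x := by simp [hgdef]
  have hg1' : g 1 = f (x + v) := by simp [hgdef]
  have hdg0 : deriv g 0 = ⟪gradient f x, v⟫_ℝ := by
    rw [hderivg]; simp [grad_inner_eq, -inner_gradient_left]
  constructor
  · have := aux1d_second_deriv_bound g (ρ * ‖v‖ ^ 2) hgdiff hg'diff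
      (fun t => by rw [hdd]; exact (hhess _ v).1)
    rw [hg0, hg1', hdg0] at this; linarith
  · have hneg : (deriv fun t => -g t) = fun t => -deriv g t := deriv.neg'
    have hb : ∀ t : ℝ, -(L * ‖v‖ ^ 2) ≤ deriv (deriv fun t => -g t) t := by
      intro t
      rw [hneg]
      have h2 : deriv (fun t => -deriv g t) t = -deriv (deriv g) t := deriv.neg
      rw [h2, hdd]
      linarith [(hhess (x + t • v) v).2]
    have h := aux1d_second_deriv_bound (fun t => -g t) (-(L * ‖v‖ ^ 2)) hgdiff.neg
      (by rw [hneg]; exact hg'diff.neg) hb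
    rw [hneg] at h
    simp only at h
    rw [hg0, hg1', hdg0] at h
    linarith

/-- The gradient is `L`-Lipschitz. -/
lemma grad_lip {p : ℕ} (f : EuclideanSpace ℝ (Fin p) → ℝ) (ρ L : ℝ)
    (hρ : 0 < ρ) (hρL : ρ ≤ L)
    (hsmooth : ContDiff ℝ 2 f)
    (hhess : ∀ θ v : EuclideanSpace ℝ (Fin p),
      ρ * ‖v‖ ^ 2 ≤ iteratedFDeriv ℝ 2 f θ ![v, v] ∧
        iteratedFDeriv ℝ 2 f θ ![v, v] ≤ L * ‖v‖ ^ 2)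
    (x y : EuclideanSpace ℝ (Fin p)) :
    ‖gradient f y - gradient f x‖ ≤ L * ‖y - x‖ := by
  have hL : 0 < L := lt_of_lt_of_le hρ hρL
  have hL0 : L ≠ 0 := ne_of_gt hL
  have coco : ∀ a b : EuclideanSpace ℝ (Fin p),
      f a + ⟪gradient f a, b - a⟫_ℝ
        + 1 / (2 * L) * ‖gradient f b - gradient f a‖ ^ 2 ≤ f b := by
    intro a b
    set Ga := gradient f a
    set Gb := gradient f b
    set w : EuclideanSpace ℝ (Fin p) := Gb - Ga with hw
    set z : EuclideanSpace ℝ (Fin p) := b - (1 / L) • w with hz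
    have h1 := (key_taylor f ρ L hsmooth hhess a (z - a)).1
    rw [add_sub_cancel] at h1
    have h2 := (key_taylor f ρ L hsmooth hhess b (z - b)).2
    rw [add_sub_cancel] at h2
    have hzb : z - b = -((1 / L) • w) := by rw [hz]; abel
    have hza : z - a = (b - a) + (z - b) := by abel
    have e1 : ⟪Ga, z - a⟫_ℝ = ⟪Ga, b - a⟫_ℝ - 1 / L * ⟪Ga, w⟫_ℝ := by
      rw [hza, inner_add_right, hzb, inner_neg_right, real_inner_smul_right]; ring
    have e2 : ⟪Gb, z - b⟫_ℝ = -(1 / L) * ⟪Gb, w⟫_ℝ := by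
      rw [hzb, inner_neg_right, real_inner_smul_right]; ring
    have e3 : ‖z - b‖ ^ 2 = 1 / L ^ 2 * ‖w‖ ^ 2 := by
      rw [hzb, norm_neg, norm_smul, mul_pow]
      rw [Real.norm_eq_abs, abs_of_pos (by positivity : (0:ℝ) < 1 / L)]
      ring
    have e4 : ⟪Gb, w⟫_ℝ = ⟪Ga, w⟫_ℝ + ‖w‖ ^ 2 := by
      have : ⟪Gb, w⟫_ℝ - ⟪Ga, w⟫_ℝ = ‖w‖ ^ 2 := by
        rw [← inner_sub_left, ← hw, real_inner_self_eq_norm_sq]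
      linarith
    have hρterm : 0 ≤ ρ / 2 * ‖z - a‖ ^ 2 := by positivity
    rw [e1] at h1
    rw [e2, e3, e4] at h2
    have hid1 : L / 2 * (1 / L ^ 2 * ‖w‖ ^ 2) = 1 / (2 * L) * ‖w‖ ^ 2 := by
      field_simp
    have hid2 : -(1 / L) * (⟪Ga, w⟫_ℝ + ‖w‖ ^ 2)
        = -(1 / L * ⟪Ga, w⟫_ℝ) - 1 / L * ‖w‖ ^ 2 := by ring
    have hid3 : 1 / L * ‖w‖ ^ 2 - 1 / (2 * L) * ‖w‖ ^ 2 = 1 / (2 * L) * ‖w‖ ^ 2 := by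
      field_simp
      ring
    rw [hid2] at h2
    linarith
  have c1 := coco x y
  have c2 := coco y x
  set Gx := gradient f x
  set Gy := gradient f y
  have hrev : ‖Gx - Gy‖ = ‖Gy - Gx‖ := norm_sub_rev _ _
  have hinner : ⟪Gx, y - x⟫_ℝ + ⟪Gy, x - y⟫_ℝ = -⟪Gy - Gx, y - x⟫_ℝ := by
    rw [inner_sub_left]
    have hxy : (x - y : EuclideanSpace ℝ (Fin p)) = -(y - x) := by abel
    rw [hxy, inner_neg_right]
    ring
  have hcs : ⟪Gy - Gx, y - x⟫_ℝ ≤ ‖Gy - Gx‖ * ‖y - x‖ := real_inner_le_norm _ _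
  rw [hrev] at c2
  have h5 : 1 / (2 * L) * ‖Gy - Gx‖ ^ 2 + 1 / (2 * L) * ‖Gy - Gx‖ ^ 2
      ≤ ‖Gy - Gx‖ * ‖y - x‖ := by linarith
  by_cases hw0 : ‖Gy - Gx‖ = 0
  · rw [hw0]; positivity
  · have hwpos : 0 < ‖Gy - Gx‖ := lt_of_le_of_ne (norm_nonneg _) (Ne.symm hw0)
    have hid : L * (1 / (2 * L) * ‖Gy - Gx‖ ^ 2 + 1 / (2 * L) * ‖Gy - Gx‖ ^ 2)
        = ‖Gy - Gx‖ ^ 2 := by field_simp; ring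
    have h6 : ‖Gy - Gx‖ ^ 2 ≤ L * (‖Gy - Gx‖ * ‖y - x‖) := by
      have := mul_le_mul_of_nonneg_left h5 hL.le
      linarith
    have h7 : ‖Gy - Gx‖ * ‖Gy - Gx‖ ≤ (L * ‖y - x‖) * ‖Gy - Gx‖ := by nlinarith
    exact le_of_mul_le_mul_right h7 hwpos
set_option maxHeartbeats 1000000

/-- **Penalized strongly convex minimization (transfer lemma).**
`f` is convex and `C²` with `ρ I ≤ ∇²f ≤ L I` everywhere, and `θhat` minimizes
`θ ↦ f θ + (λ/√n0) ‖θ - θbar‖`.  Then (i) `‖θhat - θ*‖ ≤ ‖∇f(θ*)‖/ρ + λ/(ρ√n0)`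
for every `θ*`, and (ii) if moreover `λ ≥ 2√n0 ‖∇f(θ*)‖` and
`‖θbar - θ*‖ ≤ (λ/√n0 - ‖∇f(θ*)‖)/L` for some `θ*`, then `θhat = θbar`. -/
theorem penalized_strongly_convex_minimization
    (p : ℕ) (hp : 1 ≤ p) (f : EuclideanSpace ℝ (Fin p) → ℝ)
    (ρ L : ℝ) (hρ : 0 < ρ) (hρL : ρ ≤ L)
    (hconv : ConvexOn ℝ Set.univ f) (hsmooth : ContDiff ℝ 2 f)
    (hhess : ∀ θ v : EuclideanSpace ℝ (Fin p),
      ρ * ‖v‖ ^ 2 ≤ iteratedFDeriv ℝ 2 f θ ![v, v] ∧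
        iteratedFDeriv ℝ 2 f θ ![v, v] ≤ L * ‖v‖ ^ 2)
    (θbar : EuclideanSpace ℝ (Fin p)) (n0 : ℝ) (hn0 : 0 < n0)
    (lam : ℝ) (hlam : 0 ≤ lam)
    (θhat : EuclideanSpace ℝ (Fin p))
    (hmin : ∀ θ, f θhat + lam / Real.sqrt n0 * ‖θhat - θbar‖ ≤
      f θ + lam / Real.sqrt n0 * ‖θ - θbar‖) :
    (∀ θstar, ‖θhat - θstar‖ ≤ ‖gradient f θstar‖ / ρ + lam / (ρ * Real.sqrt n0)) ∧
    (∀ θstar, 2 * Real.sqrt n0 * ‖gradient f θstar‖ ≤ lam →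
      ‖θbar - θstar‖ ≤ (lam / Real.sqrt n0 - ‖gradient f θstar‖) / L →
      θhat = θbar) := by
  have hL : 0 < L := lt_of_lt_of_le hρ hρL
  have hsq : 0 < Real.sqrt n0 := Real.sqrt_pos.mpr hn0
  set c := lam / Real.sqrt n0 with hcdef
  have hcnn : 0 ≤ c := div_nonneg hlam hsq.le
  have key := key_taylor f ρ L hsmooth hhess
  have inner_lb : ∀ u v : EuclideanSpace ℝ (Fin p), -(‖u‖ * ‖v‖) ≤ ⟪u, v⟫_ℝ := by
    intro u v
    have h := abs_real_inner_le_norm u v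
    have h2 := neg_abs_le (⟪u, v⟫_ℝ)
    linarith
  -- gradient norm bound at the minimizer
  have hGhat : ‖gradient f θhat‖ ≤ c := by
    set G := gradient f θhat with hGdef
    by_cases hG0 : G = 0
    · rw [hG0]; simpa using hcnn
    · have hGpos : 0 < ‖G‖ := norm_pos_iff.mpr hG0
      have key_t : ∀ t : ℝ, 0 < t → ‖G‖ ^ 2 ≤ L / 2 * t * ‖G‖ ^ 2 + c * ‖G‖ := by
        intro t ht
        have h1 := hmin (θhat + (-t) • G)
        have h2 : ‖θhat + (-t) • G - θbar‖ ≤ ‖θhat - θbar‖ + t * ‖G‖ := by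
          have hre : θhat + (-t) • G - θbar = (θhat - θbar) + (-t) • G := by abel
          rw [hre]
          refine (norm_add_le _ _).trans ?_
          rw [norm_smul, Real.norm_eq_abs, abs_neg, abs_of_pos ht]
        have h3 : f θhat ≤ f (θhat + (-t) • G) + c * (t * ‖G‖) := by
          have h2' := mul_le_mul_of_nonneg_left h2 hcnn
          nlinarith [h1]
        have h4 := (key θhat ((-t) • G)).2
        have e5 : ⟪G, (-t) • G⟫_ℝ = -t * ‖G‖ ^ 2 := by
          rw [real_inner_smul_right, real_inner_self_eq_norm_sq]
        have e6 : ‖(-t) • G‖ ^ 2 = t ^ 2 * ‖G‖ ^ 2 := by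
          rw [norm_smul, Real.norm_eq_abs, abs_neg, abs_of_pos ht, mul_pow]
        rw [e5, e6] at h4
        nlinarith [h3, h4]
      by_contra hcon
      push_neg at hcon
      set A := ‖G‖ ^ 2 - c * ‖G‖ with hA
      have hApos : 0 < A := by nlinarith
      set B := L / 2 * ‖G‖ ^ 2 with hB
      have hBpos : 0 < B := by positivity
      have ht := key_t (A / (2 * B)) (by positivity)
      have hid : L / 2 * (A / (2 * B)) * ‖G‖ ^ 2 = A / 2 := by
        rw [hB]; field_simp
      linarith
  constructor
  · -- part (i)
    intro θstar
    set d := θhat - θstar with hd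
    have A1 := (key θstar d).1
    rw [show θstar + d = θhat from by rw [hd]; abel] at A1
    have A2 := (key θhat (-d)).1
    rw [show θhat + -d = θstar from by rw [hd]; abel] at A2
    rw [norm_neg] at A2
    have lb1 := inner_lb (gradient f θstar) d
    have lb2 := inner_lb (gradient f θhat) (-d)
    rw [norm_neg] at lb2
    have hmul : ‖gradient f θhat‖ * ‖d‖ ≤ c * ‖d‖ :=
      mul_le_mul_of_nonneg_right hGhat (norm_nonneg d)
    have hmain : ρ * ‖d‖ ^ 2 ≤ (‖gradient f θstar‖ + c) * ‖d‖ := by nlinarith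
    have hc2 : lam / (ρ * Real.sqrt n0) = c / ρ := by
      rw [hcdef, div_div, mul_comm]
    rw [hc2, ← add_div, le_div_iff₀ hρ]
    by_cases hdz : ‖d‖ = 0
    · rw [hdz, zero_mul]
      have := norm_nonneg (gradient f θstar)
      linarith
    · have hdpos : 0 < ‖d‖ := lt_of_le_of_ne (norm_nonneg _) (Ne.symm hdz)
      have : (‖d‖ * ρ) * ‖d‖ ≤ ((‖gradient f θstar‖ + c)) * ‖d‖ := by nlinarith
      exact le_of_mul_le_mul_right this hdpos
  · -- part (ii)
    intro θstar hlam2 hclose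
    set Gstar := gradient f θstar with hGs
    set Gbar := gradient f θbar with hGb
    have hcs2 : 2 * ‖Gstar‖ ≤ c := by
      rw [hcdef, le_div_iff₀ hsq, show 2 * ‖Gstar‖ * Real.sqrt n0
        = 2 * Real.sqrt n0 * ‖Gstar‖ from by ring]
      exact hlam2
    have hlip := grad_lip f ρ L hρ hρL hsmooth hhess θstar θbar
    have hclose' : L * ‖θbar - θstar‖ ≤ c - ‖Gstar‖ := by
      rw [mul_comm]
      exact (le_div_iff₀ hL).mp hclose
    have hGbar : ‖Gbar‖ ≤ c := by
      have htri : ‖Gbar‖ ≤ ‖Gstar‖ + ‖Gbar - Gstar‖ := by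
        have h := norm_add_le Gstar (Gbar - Gstar)
        simpa using h
      linarith
    have h1 := hmin θbar
    rw [sub_self, norm_zero, mul_zero, add_zero] at h1
    have h2 := (key θbar (θhat - θbar)).1
    rw [show θbar + (θhat - θbar) = θhat from by abel] at h2
    set e := θhat - θbar with he
    have lb := inner_lb Gbar e
    have hbe : ‖Gbar‖ * ‖e‖ ≤ c * ‖e‖ :=
      mul_le_mul_of_nonneg_right hGbar (norm_nonneg e)
    have hsqz2 : ρ / 2 * ‖e‖ ^ 2 ≤ 0 := by linarith
    have hz : ρ / 2 * ‖e‖ ^ 2 = 0 := le_antisymm hsqz2 (by positivity)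
    have h0 : ‖e‖ ^ 2 = 0 := by
      rcases mul_eq_zero.mp hz with h | h
      · exfalso; linarith
      · exact h
    have he0 : e = 0 :=
      norm_eq_zero.mp ((pow_eq_zero_iff (by norm_num : (2:ℕ) ≠ 0)).mp h0)
    have hz2 : θhat - θbar = 0 := by rw [← he]; exact he0
    exact eq_of_sub_eq_zero hz2
end
end
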